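/- arXiv:2508.16205 — 5 statements merged into one kernel-verified Lean document; each statement's English description precedes it below -/
import Mathlib

section
/- Let n ≥ 1 and let H and H_Δ be Hermitian n×n complex matrices, and let T_s ≥ 0. Then ‖I - exp(i T_s H)·exp(-i T_s (H + H_Δ))‖ ≤ ‖I - exp(i T_s H_Δ)‖ + (T_s²/2)·‖[H, H_Δ]‖, where ‖·‖ is the operator norm induced by the Euclidean norm on ℂⁿ and [A,B] = AB - BA. -/
open NormedSpace

/-- The operator norm of a matrix induced by the Euclidean norm on `ℂⁿ`. -/
noncomputable def opNorm {n : ℕ} (M : Matrix (Fin n) (Fin n) ℂ) : ℝ :=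
  ‖Matrix.toEuclideanCLM (𝕜 := ℂ) (n := Fin n) M‖

set_option linter.unusedSectionVars false

section Aux

variable {E : Type*} [NormedRing E] [StarRing E] [CStarRing E] [NormedAlgebra ℂ E]
  [CompleteSpace E] [StarModule ℂ E] [Nontrivial E]

noncomputable def myRatAlg : NormedAlgebra ℚ E := NormedAlgebra.restrictScalars ℚ ℂ E

attribute [local instance] myRatAlg

lemma mySkewSmul {a : E} (ha : star a = -a) (t : ℝ) :
    ((t : ℂ) • a) ∈ skewAdjoint E := by
  rw [skewAdjoint.mem_iff, star_smul, ha, Complex.star_def, Complex.conj_ofReal, smul_neg]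

lemma myExpUnit {a : E} (ha : star a = -a) (t : ℝ) :
    exp ((t : ℂ) • a) ∈ unitary E :=
  exp_mem_unitary_of_mem_skewAdjoint (mySkewSmul ha t)

lemma myCompOfReal {F : Type*} [NormedAddCommGroup F] [NormedSpace ℂ F] {f : ℂ → F} {f' : F}
    {t : ℝ} (hf : HasDerivAt f f' (t : ℂ)) : HasDerivAt (fun s : ℝ => f s) f' t := by
  have h := ((hf.hasFDerivAt.restrictScalars ℝ).comp t Complex.ofRealCLM.hasFDerivAt).hasDerivAt
  simpa [Function.comp_def] using h

lemma myHasDerivAtExp (a : E) (t : ℝ) :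
    HasDerivAt (fun s : ℝ => exp ((s : ℂ) • a)) (exp ((t : ℂ) • a) * a) t :=
  myCompOfReal (hasDerivAt_exp_smul_const a (t : ℂ))

lemma myExpMulExpNeg (a : E) : exp a * exp (-a) = 1 := by
  rw [← exp_add_of_commute (Commute.refl a).neg_right, add_neg_cancel, exp_zero]

lemma myExpNegMulExp (a : E) : exp (-a) * exp a = 1 := by
  rw [← exp_add_of_commute (Commute.refl a).neg_left, neg_add_cancel, exp_zero]

lemma myCommBound (a b : E) (ha : star a = -a) {s : ℝ} (hs : 0 ≤ s) :
    ‖exp ((s : ℂ) • a) * b - b * exp ((s : ℂ) • a)‖ ≤ s * ‖a * b - b * a‖ := by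
  have hanegskew : star (-a) = -(-a) := by rw [star_neg, ha, neg_neg]
  set f : ℝ → E := fun t => exp ((t : ℂ) • a) * b * exp ((t : ℂ) • (-a)) with hf
  have hcomm : ∀ t : ℝ, a * exp ((t : ℂ) • (-a)) = exp ((t : ℂ) • (-a)) * a := fun t =>
    (((Commute.refl a).neg_right.smul_right ((t : ℂ))).exp_right).eq
  have hder : ∀ t : ℝ, HasDerivAt f
      (exp ((t : ℂ) • a) * (a * b - b * a) * exp ((t : ℂ) • (-a))) t := by
    intro t
    have h := ((myHasDerivAtExp a t).mul_const b).mul (myHasDerivAtExp (-a) t)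
    convert h using 1
    · rfl
    rw [mul_neg, ← hcomm t]
    noncomm_ring
  have hbound : ∀ t ∈ Set.Ico (0 : ℝ) s,
      ‖exp ((t : ℂ) • a) * (a * b - b * a) * exp ((t : ℂ) • (-a))‖ ≤ ‖a * b - b * a‖ := by
    intro t _
    rw [mul_assoc, CStarRing.norm_mem_unitary_mul _ (myExpUnit ha t),
      CStarRing.norm_mul_mem_unitary _ (myExpUnit hanegskew t)]
  have key := norm_image_sub_le_of_norm_deriv_le_segment'
    (f := f) (a := 0) (b := s)
    (fun t _ => (hder t).hasDerivWithinAt) hbound s (Set.right_mem_Icc.mpr hs)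
  have hf0 : f 0 = b := by simp [hf, exp_zero]
  rw [hf0, sub_zero] at key
  have hrw : exp ((s : ℂ) • a) * b - b * exp ((s : ℂ) • a)
      = (f s - b) * exp ((s : ℂ) • a) := by
    have h1 : exp ((s : ℂ) • (-a)) * exp ((s : ℂ) • a) = 1 := by
      rw [smul_neg, myExpNegMulExp]
    rw [hf, sub_mul, mul_assoc, mul_assoc, h1, mul_one]
  rw [hrw, CStarRing.norm_mul_mem_unitary _ (myExpUnit ha s)]
  exact key.trans (le_of_eq (mul_comm _ _))

lemma myTrotter (a b : E) (ha : star a = -a) (hb : star b = -b) :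
    ‖exp a * exp b - exp (a + b)‖ ≤ ‖a * b - b * a‖ / 2 := by
  set c : E := a + b with hc
  have hcskew : star c = -c := by rw [hc, star_add, ha, hb, neg_add]
  set K := ‖a * b - b * a‖ with hK
  set Φ : ℝ → E := fun t =>
    exp (((1 - t : ℝ) : ℂ) • c) * exp ((t : ℂ) • a) * exp ((t : ℂ) • b) with hΦ
  have hgfun : ∀ t : ℝ, exp (((1 - t : ℝ) : ℂ) • c) = exp c * exp ((t : ℂ) • (-c)) := by
    intro t
    rw [← exp_add_of_commute ((Commute.refl c).neg_right.smul_right ((t : ℂ)))]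
    congr 1
    push_cast
    rw [sub_smul, one_smul, smul_neg, sub_eq_add_neg]
  have hg : ∀ t : ℝ, HasDerivAt (fun t : ℝ => exp (((1 - t : ℝ) : ℂ) • c))
      (exp (((1 - t : ℝ) : ℂ) • c) * (-c)) t := by
    intro t
    have h := (myHasDerivAtExp (-c) t).const_mul (exp c)
    have hfun : (fun t : ℝ => exp (((1 - t : ℝ) : ℂ) • c))
        = fun t : ℝ => exp c * exp ((t : ℂ) • (-c)) := funext hgfun
    rw [hfun, hgfun t, mul_assoc]
    exact h
  have hder : ∀ t : ℝ, HasDerivAt Φ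
      (exp (((1 - t : ℝ) : ℂ) • c) *
        ((exp ((t : ℂ) • a) * b - b * exp ((t : ℂ) • a)) * exp ((t : ℂ) • b))) t := by
    intro t
    have h := (((hg t).mul (myHasDerivAtExp a t)).mul (myHasDerivAtExp b t))
    convert h using 1
    · rfl
    have hua : exp ((t : ℂ) • a) * a = a * exp ((t : ℂ) • a) :=
      (((Commute.refl a).smul_right ((t : ℂ))).exp_right).eq.symm
    have hwb : exp ((t : ℂ) • b) * b = b * exp ((t : ℂ) • b) :=
      (((Commute.refl b).smul_right ((t : ℂ))).exp_right).eq.symm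
    simp only [Pi.mul_apply]
    rw [hua, hwb, hc]
    noncomm_ring
  set f : ℝ → E := fun t => Φ t - Φ 0 with hfdef
  have hB : ∀ x : ℝ, HasDerivAt (fun t : ℝ => t ^ 2 / 2 * K) (x * K) x := by
    intro x
    have h := ((hasDerivAt_pow 2 x).div_const 2).mul_const K
    exact h.congr_deriv (by ring)
  have hbound : ∀ t ∈ Set.Ico (0 : ℝ) 1,
      ‖exp (((1 - t : ℝ) : ℂ) • c) *
        ((exp ((t : ℂ) • a) * b - b * exp ((t : ℂ) • a)) * exp ((t : ℂ) • b))‖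
        ≤ t * K := by
    intro t ht
    rw [CStarRing.norm_mem_unitary_mul _ (myExpUnit hcskew (1 - t)),
      CStarRing.norm_mul_mem_unitary _ (myExpUnit hb t)]
    exact myCommBound a b ha ht.1
  have key := image_norm_le_of_norm_deriv_right_le_deriv_boundary
    (f := f) (a := 0) (b := 1)
    (f' := fun t => exp (((1 - t : ℝ) : ℂ) • c) *
        ((exp ((t : ℂ) • a) * b - b * exp ((t : ℂ) • a)) * exp ((t : ℂ) • b)))
    (fun t _ => ((hder t).sub_const (Φ 0)).continuousAt.continuousWithinAt)
    (fun t _ => ((hder t).sub_const (Φ 0)).hasDerivWithinAt)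
    (B := fun t => t ^ 2 / 2 * K) (B' := fun t => t * K)
    (by simp [hfdef]) hB hbound (Set.right_mem_Icc.mpr zero_le_one)
  have hΦ0 : Φ 0 = exp c := by
    simp [hΦ, exp_zero]
  have hΦ1 : Φ 1 = exp a * exp b := by
    simp [hΦ, exp_zero]
  have hkey : ‖Φ 1 - Φ 0‖ ≤ 1 ^ 2 / 2 * K := key
  rw [hΦ0, hΦ1] at hkey
  calc ‖exp a * exp b - exp (a + b)‖ = ‖exp a * exp b - exp c‖ := by rw [hc]
    _ ≤ 1 ^ 2 / 2 * K := hkey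
    _ = K / 2 := by ring

end Aux

set_option maxHeartbeats 1000000 in
set_option synthInstance.maxHeartbeats 400000 in
theorem stmt1 (n : ℕ) (hn : 1 ≤ n) (H HΔ : Matrix (Fin n) (Fin n) ℂ)
    (hH : H.IsHermitian) (hHΔ : HΔ.IsHermitian) (Ts : ℝ) (hTs : 0 ≤ Ts) :
    opNorm (1 - exp ((Complex.I * (Ts : ℂ)) • H)
        * exp ((-(Complex.I * (Ts : ℂ))) • (H + HΔ)))
      ≤ opNorm (1 - exp ((Complex.I * (Ts : ℂ)) • HΔ))
        + Ts ^ 2 / 2 * opNorm (H * HΔ - HΔ * H) := by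
  classical
  letI : SeminormedRing (Matrix (Fin n) (Fin n) ℂ) := Matrix.linftyOpSemiNormedRing
  letI : NormedRing (Matrix (Fin n) (Fin n) ℂ) := Matrix.linftyOpNormedRing
  letI : NormedAlgebra ℂ (Matrix (Fin n) (Fin n) ℂ) := Matrix.linftyOpNormedAlgebra
  letI := myRatAlg (E := Matrix (Fin n) (Fin n) ℂ)
  letI := myRatAlg (E := EuclideanSpace ℂ (Fin n) →L[ℂ] EuclideanSpace ℂ (Fin n))
  set φ := Matrix.toEuclideanCLM (𝕜 := ℂ) (n := Fin n) with hφ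
  have hφcont : Continuous φ :=
    LinearMap.continuous_of_finiteDimensional φ.toAlgEquiv.toLinearMap
  have hmapexp : ∀ M : Matrix (Fin n) (Fin n) ℂ, φ (exp M) = exp (φ M) :=
    fun M => map_exp φ hφcont M
  haveI : Nontrivial (EuclideanSpace ℂ (Fin n)) := by
    refine ⟨0, EuclideanSpace.single ⟨0, hn⟩ 1, fun h => ?_⟩
    have h0 := congrArg (fun v => v ⟨0, hn⟩) h
    simp [EuclideanSpace.single_apply] at h0
  haveI : Nontrivial (EuclideanSpace ℂ (Fin n) →L[ℂ] EuclideanSpace ℂ (Fin n)) := by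
    obtain ⟨x, y, hxy⟩ := exists_pair_ne (EuclideanSpace ℂ (Fin n))
    refine ⟨1, 0, fun h => hxy ?_⟩
    have hx := congrArg (fun f => f x) h
    have hy := congrArg (fun f => f y) h
    simp at hx hy
    rw [hx, hy]
  set S : EuclideanSpace ℂ (Fin n) →L[ℂ] EuclideanSpace ℂ (Fin n) := φ H with hS
  set D : EuclideanSpace ℂ (Fin n) →L[ℂ] EuclideanSpace ℂ (Fin n) := φ HΔ with hD
  have hSsa : star S = S := by
    rw [hS, ← map_star]; exact congrArg φ hH
  have hDsa : star D = D := by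
    rw [hD, ← map_star]; exact congrArg φ hHΔ
  set a := (Complex.I * (Ts : ℂ)) • S with ha_def
  set b := (Complex.I * (Ts : ℂ)) • D with hb_def
  have haskew : star a = -a := by
    simp only [ha_def, star_smul, hSsa, Complex.star_def, map_mul, Complex.conj_I,
      Complex.conj_ofReal, neg_mul]
    module
  have hbskew : star b = -b := by
    simp only [hb_def, star_smul, hDsa, Complex.star_def, map_mul, Complex.conj_I,
      Complex.conj_ofReal, neg_mul]
    module
  have hLHS : opNorm (1 - exp ((Complex.I * (Ts : ℂ)) • H)
        * exp ((-(Complex.I * (Ts : ℂ))) • (H + HΔ)))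
      = ‖1 - exp a * exp (-(a + b))‖ := by
    have harg : (-(Complex.I * (Ts : ℂ))) • (H + HΔ)
        = -((Complex.I * (Ts : ℂ)) • H + (Complex.I * (Ts : ℂ)) • HΔ) := by module
    rw [opNorm, ← hφ, map_sub, map_one, map_mul, hmapexp, hmapexp, harg, map_neg, map_add,
      map_smul, map_smul]
  have hRHS1 : opNorm (1 - exp ((Complex.I * (Ts : ℂ)) • HΔ)) = ‖1 - exp b‖ := by
    rw [opNorm, ← hφ, map_sub, map_one, hmapexp, map_smul]
  have hRHS2 : opNorm (H * HΔ - HΔ * H) = ‖S * D - D * S‖ := by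
    rw [opNorm, ← hφ, map_sub, map_mul, map_mul]
  rw [hLHS, hRHS1, hRHS2]
  have hsplit : (1 : EuclideanSpace ℂ (Fin n) →L[ℂ] EuclideanSpace ℂ (Fin n))
        - exp a * exp (-(a + b))
      = (1 - exp (-b)) + exp a * (exp (-a) * exp (-b) - exp (-(a + b))) := by
    rw [mul_sub, ← mul_assoc,
      myExpMulExpNeg (E := EuclideanSpace ℂ (Fin n) →L[ℂ] EuclideanSpace ℂ (Fin n))]
    noncomm_ring
  have hstep1 : ‖(1 : EuclideanSpace ℂ (Fin n) →L[ℂ] EuclideanSpace ℂ (Fin n)) - exp (-b)‖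
      = ‖1 - exp b‖ := by
    have hu : exp (-b) ∈ unitary (EuclideanSpace ℂ (Fin n) →L[ℂ] EuclideanSpace ℂ (Fin n)) :=
      exp_mem_unitary_of_mem_skewAdjoint (neg_mem (skewAdjoint.mem_iff.mpr hbskew))
    have hrw : (1 : EuclideanSpace ℂ (Fin n) →L[ℂ] EuclideanSpace ℂ (Fin n)) - exp (-b)
        = -(exp (-b) * (1 - exp b)) := by
      rw [mul_sub, mul_one,
        myExpNegMulExp (E := EuclideanSpace ℂ (Fin n) →L[ℂ] EuclideanSpace ℂ (Fin n)) b, neg_sub]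
    rw [hrw, norm_neg]
    exact CStarRing.norm_mem_unitary_mul _ hu
  have haunit : exp a ∈ unitary (EuclideanSpace ℂ (Fin n) →L[ℂ] EuclideanSpace ℂ (Fin n)) :=
    exp_mem_unitary_of_mem_skewAdjoint (skewAdjoint.mem_iff.mpr haskew)
  have hstep2 : ‖exp a * (exp (-a) * exp (-b) - exp (-(a + b)))‖
      ≤ ‖a * b - b * a‖ / 2 := by
    rw [CStarRing.norm_mem_unitary_mul _ haunit]
    have h := myTrotter (E := EuclideanSpace ℂ (Fin n) →L[ℂ] EuclideanSpace ℂ (Fin n)) (-a) (-b)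
      (skewAdjoint.mem_iff.mp (neg_mem (skewAdjoint.mem_iff.mpr haskew)))
      (skewAdjoint.mem_iff.mp (neg_mem (skewAdjoint.mem_iff.mpr hbskew)))
    have heq : -a + -b = -(a + b) := (neg_add a b).symm
    rw [heq] at h
    have hmm : -a * -b - -b * -a = a * b - b * a :=
      congrArg₂ (· - ·) (neg_mul_neg a b) (neg_mul_neg b a)
    calc ‖exp (-a) * exp (-b) - exp (-(a + b))‖
        ≤ ‖(-a) * (-b) - (-b) * (-a)‖ / 2 := h
      _ = ‖a * b - b * a‖ / 2 := by rw [hmm]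
  have hcommnorm : ‖a * b - b * a‖ = Ts ^ 2 * ‖S * D - D * S‖ := by
    have hab : a * b - b * a
        = ((Complex.I * (Ts : ℂ)) * (Complex.I * (Ts : ℂ))) • (S * D - D * S) := by
      rw [ha_def, hb_def]
      simp [smul_smul, smul_sub, smul_mul_assoc, mul_smul_comm]
    have h2 : ‖((Complex.I * (Ts : ℂ)) * (Complex.I * (Ts : ℂ))) • (S * D - D * S)‖
        = ‖(Complex.I * (Ts : ℂ)) * (Complex.I * (Ts : ℂ))‖ * ‖S * D - D * S‖ :=
      norm_smul (α := ℂ) (β := EuclideanSpace ℂ (Fin n) →L[ℂ] EuclideanSpace ℂ (Fin n)) _ _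
    rw [hab, h2]
    congr 1
    rw [norm_mul, norm_mul, Complex.norm_I, Complex.norm_real, one_mul, Real.norm_eq_abs,
      abs_of_nonneg hTs]
    ring
  calc ‖1 - exp a * exp (-(a + b))‖
      ≤ ‖(1 : EuclideanSpace ℂ (Fin n) →L[ℂ] EuclideanSpace ℂ (Fin n)) - exp (-b)‖
        + ‖exp a * (exp (-a) * exp (-b) - exp (-(a + b)))‖ := by
        rw [hsplit]; exact norm_add_le _ _
    _ ≤ ‖1 - exp b‖ + ‖a * b - b * a‖ / 2 := by
        rw [hstep1]; exact add_le_add_right hstep2 _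
    _ = ‖1 - exp b‖ + Ts ^ 2 / 2 * ‖S * D - D * S‖ := by rw [hcommnorm]; ring
end

section
/- Let l ≥ 1 be an integer and let θ_1,…,θ_l be real numbers with 0 ≤ θ_i ≤ π/2 for each i and θ_1 + … + θ_l ≤ π/2. Let φ_0, φ_1, …, φ_l be unit vectors in ℂ², and let W_1,…,W_l be unitary 2×2 complex matrices such that |⟨φ_i, W_i φ_{i-1}⟩| ≥ cos(θ_i) for each i = 1,…,l. Then |⟨φ_l, W_l W_{l-1} ⋯ W_1 φ_0⟩| ≥ cos(θ_1 + … + θ_l). -/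
open scoped InnerProductSpace Matrix

set_option maxHeartbeats 1000000

/-- The action of an `n × n` complex matrix on `ℂⁿ` with the Euclidean inner product. -/
noncomputable def act {n : ℕ} (M : Matrix (Fin n) (Fin n) ℂ)
    (v : EuclideanSpace ℂ (Fin n)) : EuclideanSpace ℂ (Fin n) :=
  Matrix.toEuclideanLin M v

lemma act_mul {n : ℕ} (M N : Matrix (Fin n) (Fin n) ℂ) (v : EuclideanSpace ℂ (Fin n)) :
    act (M * N) v = act M (act N v) := by
  simp [act, Matrix.toEuclideanLin_apply, Matrix.mulVec_mulVec]

lemma act_one {n : ℕ} (v : EuclideanSpace ℂ (Fin n)) : act 1 v = v := by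
  simp [act, Matrix.toEuclideanLin_apply]

lemma act_inner {n : ℕ} (M : Matrix (Fin n) (Fin n) ℂ) (hM : Mᴴ * M = 1)
    (x y : EuclideanSpace ℂ (Fin n)) : ⟪act M x, act M y⟫_ℂ = ⟪x, y⟫_ℂ := by
  have h1 : ⟪act M x, act M y⟫_ℂ = ⟪x, act Mᴴ (act M y)⟫_ℂ := by
    rw [show act Mᴴ (act M y) = LinearMap.adjoint (Matrix.toEuclideanLin M) (act M y) by
      rw [act, Matrix.toEuclideanLin_conjTranspose_eq_adjoint],
      LinearMap.adjoint_inner_right]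
    rfl
  rw [h1, ← act_mul, hM, act_one]

lemma act_norm {n : ℕ} (M : Matrix (Fin n) (Fin n) ℂ) (hM : Mᴴ * M = 1)
    (x : EuclideanSpace ℂ (Fin n)) : ‖act M x‖ = ‖x‖ := by
  have := act_inner M hM x x
  rw [inner_self_eq_norm_sq_to_K, inner_self_eq_norm_sq_to_K] at this
  have h2 : (‖act M x‖ : ℝ) ^ 2 = ‖x‖ ^ 2 := by exact_mod_cast this
  nlinarith [norm_nonneg (act M x), norm_nonneg x]

lemma prod_unitary {n : ℕ} (L : List (Matrix (Fin n) (Fin n) ℂ))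
    (h : ∀ M ∈ L, Mᴴ * M = 1) : (L.prod)ᴴ * L.prod = 1 := by
  induction L with
  | nil => simp
  | cons A L ih =>
    have hA := h A (by simp)
    have hL := ih (fun M hM => h M (by simp [hM]))
    simp only [List.prod_cons, Matrix.conjTranspose_mul]
    calc L.prodᴴ * Aᴴ * (A * L.prod) = L.prodᴴ * (Aᴴ * A) * L.prod := by
          rw [mul_assoc, mul_assoc, mul_assoc]
      _ = 1 := by rw [hA, mul_one, hL]

lemma key (u v w : EuclideanSpace ℂ (Fin 2)) (hu : ‖u‖ = 1) (hv : ‖v‖ = 1) (hw : ‖w‖ = 1)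
    (α β : ℝ) (hα0 : 0 ≤ α) (hβ0 : 0 ≤ β) (hαβ : α + β ≤ Real.pi / 2)
    (h1 : Real.cos α ≤ ‖⟪v, u⟫_ℂ‖) (h2 : Real.cos β ≤ ‖⟪w, v⟫_ℂ‖) :
    Real.cos (α + β) ≤ ‖⟪w, u⟫_ℂ‖ := by
  classical
  set v' : EuclideanSpace ℂ (Fin 2) :=
    (WithLp.equiv 2 (Fin 2 → ℂ)).symm ![-(starRingEnd ℂ (v 1)), starRingEnd ℂ (v 0)] with hv'def
  have hv'0 : v' 0 = -(starRingEnd ℂ (v 1)) := rfl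
  have hv'1 : v' 1 = starRingEnd ℂ (v 0) := rfl
  have hvv : ⟪v, v⟫_ℂ = 1 := by rw [inner_self_eq_norm_sq_to_K, hv]; norm_num
  have hvsum : starRingEnd ℂ (v 0) * v 0 + starRingEnd ℂ (v 1) * v 1 = 1 := by
    rw [← hvv, PiLp.inner_apply, Fin.sum_univ_two]; simp only [RCLike.inner_apply]; ring
  set f : Fin 2 → EuclideanSpace ℂ (Fin 2) := ![v, v'] with hfdef
  have hON : Orthonormal ℂ f := by
    rw [orthonormal_iff_ite]
    intro i j
    fin_cases i <;> fin_cases j <;>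
      simp only [hfdef, Fin.zero_eta, Fin.mk_one, Matrix.cons_val_zero, Matrix.cons_val_one,
        Matrix.head_cons, PiLp.inner_apply, Fin.sum_univ_two, hv'0, hv'1, RCLike.inner_apply,
        map_neg, Complex.conj_conj, if_true, if_pos rfl]
    · linear_combination hvsum
    · rw [if_neg (by decide)]; ring
    · rw [if_neg (by decide)]; ring
    · linear_combination hvsum
  have hcard : Fintype.card (Fin 2) = Module.finrank ℂ (EuclideanSpace ℂ (Fin 2)) := by simp
  let b : OrthonormalBasis (Fin 2) ℂ (EuclideanSpace ℂ (Fin 2)) :=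
    (basisOfOrthonormalOfCardEqFinrank hON hcard).toOrthonormalBasis
      (by rwa [coe_basisOfOrthonormalOfCardEqFinrank])
  have hb : ⇑b = f := by
    simp [b, Module.Basis.coe_toOrthonormalBasis, coe_basisOfOrthonormalOfCardEqFinrank]
  have hb0 : b 0 = v := by rw [hb]; rfl
  have hb1 : b 1 = v' := by rw [hb]; rfl
  have parseval : ∀ x : EuclideanSpace ℂ (Fin 2), ‖x‖ = 1 →
      ‖⟪v, x⟫_ℂ‖ ^ 2 + ‖⟪v', x⟫_ℂ‖ ^ 2 = 1 := by
    intro x hx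
    have h := b.sum_inner_mul_inner x x
    rw [Fin.sum_univ_two, hb0, hb1, ← inner_conj_symm x v, ← inner_conj_symm x v',
      RCLike.conj_mul, RCLike.conj_mul,
      inner_self_eq_norm_sq_to_K, hx] at h
    have h2 : ‖⟪ v, x⟫_ℂ‖ ^ 2 + ‖⟪ v', x⟫_ℂ‖ ^ 2 = 1 ^ 2 := by exact_mod_cast h
    simpa using h2
  have hPu := parseval u hu
  have hPw : ‖⟪v, w⟫_ℂ‖ ^ 2 + ‖⟪v', w⟫_ℂ‖ ^ 2 = 1 := parseval w hw
  have hexp := b.sum_inner_mul_inner w u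
  rw [Fin.sum_univ_two, hb0, hb1] at hexp
  clear_value v' f b
  have hwv : ‖⟪w, v⟫_ℂ‖ = ‖⟪v, w⟫_ℂ‖ := norm_inner_symm w v
  have hwv' : ‖⟪w, v'⟫_ℂ‖ = ‖⟪v', w⟫_ℂ‖ := norm_inner_symm w v'
  have hαpi : α ≤ Real.pi / 2 := by linarith
  have hβpi : β ≤ Real.pi / 2 := by linarith
  have hcosα : 0 ≤ Real.cos α := Real.cos_nonneg_of_mem_Icc ⟨by linarith, hαpi⟩
  have hcosβ : 0 ≤ Real.cos β := Real.cos_nonneg_of_mem_Icc ⟨by linarith, hβpi⟩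
  have hsinα : 0 ≤ Real.sin α := Real.sin_nonneg_of_nonneg_of_le_pi hα0 (by linarith [Real.pi_pos])
  have hsinβ : 0 ≤ Real.sin β := Real.sin_nonneg_of_nonneg_of_le_pi hβ0 (by linarith [Real.pi_pos])
  have hpyα : Real.cos α ^ 2 + Real.sin α ^ 2 = 1 := by
    rw [add_comm]; exact Real.sin_sq_add_cos_sq α
  have hpyβ : Real.cos β ^ 2 + Real.sin β ^ 2 = 1 := by
    rw [add_comm]; exact Real.sin_sq_add_cos_sq β
  have hA' : ‖⟪v', u⟫_ℂ‖ ≤ Real.sin α := by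
    nlinarith [norm_nonneg (⟪v', u⟫_ℂ), norm_nonneg (⟪v, u⟫_ℂ)]
  have hB' : ‖⟪v', w⟫_ℂ‖ ≤ Real.sin β := by
    nlinarith [norm_nonneg (⟪v', w⟫_ℂ), norm_nonneg (⟪v, w⟫_ℂ), hwv]
  have htri : ‖⟪w, v⟫_ℂ * ⟪v, u⟫_ℂ‖ ≤ ‖⟪w, u⟫_ℂ‖ + ‖⟪w, v'⟫_ℂ * ⟪v', u⟫_ℂ‖ := by
    calc ‖⟪w, v⟫_ℂ * ⟪v, u⟫_ℂ‖
        = ‖⟪w, u⟫_ℂ - ⟪w, v'⟫_ℂ * ⟪v', u⟫_ℂ‖ := by rw [← hexp]; ring_nf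
      _ ≤ ‖⟪w, u⟫_ℂ‖ + ‖⟪w, v'⟫_ℂ * ⟪v', u⟫_ℂ‖ := norm_sub_le _ _
  rw [norm_mul, norm_mul, hwv'] at htri
  have t1 : Real.cos β * Real.cos α ≤ ‖⟪w, v⟫_ℂ‖ * ‖⟪v, u⟫_ℂ‖ :=
    mul_le_mul h2 h1 hcosα (norm_nonneg _)
  have t2 : ‖⟪v', w⟫_ℂ‖ * ‖⟪v', u⟫_ℂ‖ ≤ Real.sin β * Real.sin α :=
    mul_le_mul hB' hA' (norm_nonneg _) hsinβ
  rw [Real.cos_add]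
  nlinarith [t1, t2, htri]

lemma aux : ∀ (l : ℕ) (θ : Fin l → ℝ), (∀ i, 0 ≤ θ i) → (∑ i, θ i ≤ Real.pi / 2) →
    ∀ (φ : Fin (l + 1) → EuclideanSpace ℂ (Fin 2)), (∀ i, ‖φ i‖ = 1) →
    ∀ (W : Fin l → Matrix (Fin 2) (Fin 2) ℂ), (∀ i, (W i)ᴴ * W i = 1) →
    (∀ i : Fin l, Real.cos (θ i) ≤ ‖⟪φ i.succ, act (W i) (φ i.castSucc)⟫_ℂ‖) →
    Real.cos (∑ i, θ i) ≤ ‖⟪φ (Fin.last l), act ((List.ofFn W).reverse.prod) (φ 0)⟫_ℂ‖ := by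
  intro l
  induction l with
  | zero =>
    intro θ _ _ φ hφ W _ _
    have h0 : (List.ofFn W) = [] := by simp
    rw [h0, show (Fin.last 0) = 0 from rfl]
    simp only [List.reverse_nil, List.prod_nil, act_one, Finset.univ_eq_empty,
      Finset.sum_empty, Real.cos_zero]
    rw [inner_self_eq_norm_sq_to_K, hφ 0]
    norm_num
  | succ l ih =>
    intro θ hθ0 hθsum φ hφ W hW hover
    set P := (List.ofFn (fun i : Fin l => W i.castSucc)).reverse.prod with hP
    have hPU : Pᴴ * P = 1 := by
      refine prod_unitary _ ?_
      intro M hM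
      rw [List.mem_reverse] at hM
      obtain ⟨i, rfl⟩ := List.mem_ofFn.1 hM
      exact hW _
    have hsum' : ∑ i : Fin (l + 1), θ i = (∑ i : Fin l, θ i.castSucc) + θ (Fin.last l) :=
      Fin.sum_univ_castSucc θ
    have hsubsum : ∑ i : Fin l, θ i.castSucc ≤ Real.pi / 2 := by
      have := hθ0 (Fin.last l)
      rw [hsum'] at hθsum; linarith
    have IH := ih (fun i => θ i.castSucc) (fun i => hθ0 _) hsubsum
      (fun i => φ i.castSucc) (fun i => hφ _) (fun i => W i.castSucc) (fun i => hW _)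
      (by
        intro i
        have h := hover i.castSucc
        simpa only [Fin.succ_castSucc] using h)
    simp only [Fin.castSucc_zero] at IH
    have hprod : (List.ofFn W).reverse.prod = W (Fin.last l) * P := by
      rw [List.ofFn_succ', List.concat_eq_append, List.reverse_append, List.reverse_singleton, List.singleton_append, List.prod_cons, hP]
    rw [hprod, act_mul, hsum']
    have hPnorm : ‖act P (φ 0)‖ = 1 := by rw [act_norm _ hPU, hφ]
    refine key (act (W (Fin.last l)) (act P (φ 0)))
      (act (W (Fin.last l)) (φ ((Fin.last l).castSucc))) (φ (Fin.last (l + 1)))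
      (by rw [act_norm _ (hW _), hPnorm]) (by rw [act_norm _ (hW _), hφ]) (hφ _)
      _ _ (Finset.sum_nonneg fun i _ => hθ0 _) (hθ0 _) (by rw [← hsum']; exact hθsum) ?_ ?_
    · rw [act_inner _ (hW _)]; exact IH
    · have h := hover (Fin.last l)
      rwa [Fin.succ_last] at h

theorem stmt6 (l : ℕ) (hl : 1 ≤ l) (θ : Fin l → ℝ)
    (hθ0 : ∀ i, 0 ≤ θ i) (hθhalf : ∀ i, θ i ≤ Real.pi / 2)
    (hθsum : ∑ i, θ i ≤ Real.pi / 2)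
    (φ : Fin (l + 1) → EuclideanSpace ℂ (Fin 2)) (hφ : ∀ i, ‖φ i‖ = 1)
    (W : Fin l → Matrix (Fin 2) (Fin 2) ℂ)
    (hW : ∀ i, (W i)ᴴ * W i = 1)
    (hover : ∀ i : Fin l, Real.cos (θ i) ≤ ‖⟪φ i.succ, act (W i) (φ i.castSucc)⟫_ℂ‖) :
    Real.cos (∑ i, θ i) ≤ ‖⟪φ (Fin.last l), act ((List.ofFn W).reverse.prod) (φ 0)⟫_ℂ‖ :=
  aux l θ hθ0 hθsum φ hφ W hW hover
end

section
/- Let T_s ≥ 0 and Δ̄ ≥ 0 with Δ̄·T_s ≤ π/2. Let H : ℝ → (2×2 complex matrices) and H_Δ : ℝ → (2×2 complex matrices) be continuous with H(t) and H_Δ(t) Hermitian and ‖H_Δ(t)‖ ≤ Δ̄ for all t ∈ [0, T_s], where ‖·‖ is the operator norm induced by the Euclidean norm on ℂ². Suppose φ, ψ : ℝ → ℂ² satisfy, for all t ∈ [0, T_s], the derivative conditions φ'(t) = -i H(t) φ(t) and ψ'(t) = -i (H(t) + H_Δ(t)) ψ(t), with φ(0) = ψ(0) a unit vector. Then |⟨φ(T_s),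 ψ(T_s)⟩|² ≥ cos²(Δ̄ T_s). -/
open scoped InnerProductSpace

section Aux

open Set Filter Topology

lemma aux_mul_cos_le_sin {x : ℝ} (h0 : 0 ≤ x) (h : x ≤ Real.pi / 2) :
    x * Real.cos x ≤ Real.sin x := by
  rcases eq_or_lt_of_le h0 with rfl | hx
  · simp
  rcases eq_or_lt_of_le h with rfl | hx2
  · simp [Real.cos_pi_div_two, Real.sin_pi_div_two]
  · have ht := Real.lt_tan hx hx2
    have hc : 0 < Real.cos x :=
      Real.cos_pos_of_mem_Ioo ⟨by linarith [Real.pi_pos], hx2⟩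
    rw [Real.tan_eq_sin_div_cos, lt_div_iff₀ hc] at ht
    linarith

lemma comparison (K T : ℝ) (hK : 0 ≤ K) (hT : 0 ≤ T) (hb : K * T ≤ Real.pi / 2)
    (r r' : ℝ → ℝ)
    (hd : ∀ t ∈ Set.Icc (0:ℝ) T, HasDerivAt r (r' t) t)
    (hlb : ∀ t ∈ Set.Icc (0:ℝ) T, -(K * Real.sqrt (1 - r t ^ 2)) ≤ r' t)
    (h0 : r 0 = 1) :
    Real.cos (K * T) ≤ r T := by
  have hrc : ∀ t ∈ Set.Icc (0:ℝ) T, ContinuousAt r t := fun t ht => (hd t ht).continuousAt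
  have main : ∀ ε > (0:ℝ), ∀ t ∈ Set.Icc (0:ℝ) T, Real.cos (K * t) - ε * t ≤ r t := by
    intro ε hε
    by_contra hcon
    push_neg at hcon
    obtain ⟨t₁, ht₁, hlt⟩ := hcon
    set w : ℝ → ℝ := fun t => r t - Real.cos (K * t) + ε * t with hwdef
    have hw1 : w t₁ < 0 := by simp only [hwdef]; linarith
    have hsub : Set.Icc (0:ℝ) t₁ ⊆ Set.Icc 0 T := Set.Icc_subset_Icc le_rfl ht₁.2
    have hwc : ∀ t ∈ Set.Icc (0:ℝ) t₁, ContinuousAt w t := by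
      intro t ht
      exact ((hrc t (hsub ht)).sub ((Real.continuous_cos.comp
        (continuous_const.mul continuous_id)).continuousAt)).add
        (continuous_const.mul continuous_id).continuousAt
    set S : Set ℝ := {t ∈ Set.Icc (0:ℝ) t₁ | 0 ≤ w t} with hSdef
    have hS0 : (0:ℝ) ∈ S := by
      refine ⟨⟨le_rfl, ht₁.1⟩, ?_⟩
      simp [hwdef, h0]
    have hSne : S.Nonempty := ⟨0, hS0⟩
    have hSbdd : BddAbove S := ⟨t₁, fun t ht => ht.1.2⟩
    set t₀ : ℝ := sSup S with ht₀def
    have ht₀mem : t₀ ∈ Set.Icc (0:ℝ) t₁ :=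
      ⟨le_csSup hSbdd hS0, csSup_le hSne fun t ht => ht.1.2⟩
    have ht₀T : t₀ ∈ Set.Icc (0:ℝ) T := hsub ht₀mem
    -- w t₀ ≥ 0 via closure
    have ht₀cl : t₀ ∈ closure S := csSup_mem_closure hSne hSbdd
    have hwt₀c : ContinuousAt w t₀ := hwc t₀ ht₀mem
    have hwt₀ : 0 ≤ w t₀ := by
      have hne : (𝓝[S] t₀).NeBot := mem_closure_iff_nhdsWithin_neBot.mp ht₀cl
      refine ge_of_tendsto (hwt₀c.continuousWithinAt (s := S)) ?_
      filter_upwards [self_mem_nhdsWithin] with t ht using ht.2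
    have ht₀lt : t₀ < t₁ := by
      rcases lt_or_eq_of_le ht₀mem.2 with h | h
      · exact h
      · exfalso; rw [h] at hwt₀; linarith
    have hIoc : ∀ t ∈ Set.Ioc t₀ t₁, w t < 0 := by
      intro t ht
      by_contra hge
      push_neg at hge
      have : t ∈ S := ⟨⟨le_trans ht₀mem.1 ht.1.le, ht.2⟩, hge⟩
      exact absurd (le_csSup hSbdd this) (not_le.mpr ht.1)
    have hwt₀' : w t₀ ≤ 0 := by
      have hne : (𝓝[>] t₀).NeBot := nhdsGT_neBot t₀
      refine le_of_tendsto (hwt₀c.continuousWithinAt (s := Set.Ioi t₀)) ?_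
      filter_upwards [Ioc_mem_nhdsGT ht₀lt] with t ht using (hIoc t ht).le
    have hwt₀0 : w t₀ = 0 := le_antisymm hwt₀' hwt₀
    -- derivative of w at t₀
    set d : ℝ := r' t₀ + K * Real.sin (K * t₀) + ε with hddef
    have hdw : HasDerivAt w d t₀ := by
      have h1 : HasDerivAt (fun t : ℝ => Real.cos (K * t))
          (-Real.sin (K * t₀) * K) t₀ :=
        (Real.hasDerivAt_cos (K * t₀)).comp t₀ ((hasDerivAt_id t₀).const_mul K |>.congr_deriv (by ring))
      have h2 : HasDerivAt (fun t : ℝ => ε * t) ε t₀ :=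
        (hasDerivAt_id t₀).const_mul ε |>.congr_deriv (by ring)
      have := ((hd t₀ ht₀T).sub h1).add h2
      exact this.congr_deriv (by rw [hddef]; ring)
    -- d ≤ 0 from right-sided slopes
    have hdle : d ≤ 0 := by
      have hslope : Tendsto (slope w t₀) (𝓝[>] t₀) (𝓝 d) :=
        (hasDerivAt_iff_tendsto_slope.mp hdw).mono_left
          (nhdsWithin_mono _ fun x hx => ne_of_gt hx)
      have hne : (𝓝[>] t₀).NeBot := nhdsGT_neBot t₀
      refine le_of_tendsto hslope ?_
      filter_upwards [Ioc_mem_nhdsGT ht₀lt] with t ht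
      rw [slope_def_field]
      have h1 : w t < 0 := hIoc t ht
      have h2 : 0 < t - t₀ := sub_pos.mpr ht.1
      rw [hwt₀0]
      exact div_nonpos_of_nonpos_of_nonneg (by linarith) h2.le
    -- d > 0 : contradiction
    have hr₀ : r t₀ = Real.cos (K * t₀) - ε * t₀ := by
      have := hwt₀0
      simp only [hwdef] at this
      linarith
    have hx0 : 0 ≤ K * t₀ := mul_nonneg hK ht₀mem.1
    have hxpi : K * t₀ ≤ Real.pi / 2 := by
      calc K * t₀ ≤ K * T := by nlinarith [ht₀T.2]
      _ ≤ Real.pi / 2 := hb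
    have hsin : 0 ≤ Real.sin (K * t₀) :=
      Real.sin_nonneg_of_nonneg_of_le_pi hx0 (by linarith [Real.pi_pos])
    have hkey : K * Real.sqrt (1 - r t₀ ^ 2) < K * Real.sin (K * t₀) + ε := by
      rcases le_or_gt (1 - r t₀ ^ 2) 0 with hneg | hpos
      · rw [Real.sqrt_eq_zero_of_nonpos hneg, mul_zero]
        positivity
      · have hsq : K ^ 2 * (1 - r t₀ ^ 2) < (K * Real.sin (K * t₀) + ε) ^ 2 := by
          have h1 : (K * t₀) * Real.cos (K * t₀) ≤ Real.sin (K * t₀) :=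
            aux_mul_cos_le_sin hx0 hxpi
          have hpyth : Real.sin (K * t₀) ^ 2 + Real.cos (K * t₀) ^ 2 = 1 :=
            Real.sin_sq_add_cos_sq (K * t₀)
          rw [hr₀]
          have h3 : K * ε * (K * t₀ * Real.cos (K * t₀)) ≤ K * ε * Real.sin (K * t₀) :=
            mul_le_mul_of_nonneg_left h1 (mul_nonneg hK hε.le)
          have hp2 : K ^ 2 * Real.sin (K * t₀) ^ 2 + K ^ 2 * Real.cos (K * t₀) ^ 2 = K ^ 2 := by
            linear_combination (K ^ 2) * hpyth
          nlinarith [h3, hp2, sq_nonneg (K * (ε * t₀)), hε]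
        have h2 : K * Real.sqrt (1 - r t₀ ^ 2) = Real.sqrt (K ^ 2 * (1 - r t₀ ^ 2)) := by
          rw [Real.sqrt_mul (sq_nonneg K), Real.sqrt_sq hK]
        rw [h2]
        calc Real.sqrt (K ^ 2 * (1 - r t₀ ^ 2))
            < Real.sqrt ((K * Real.sin (K * t₀) + ε) ^ 2) :=
              Real.sqrt_lt_sqrt (by positivity) hsq
          _ = K * Real.sin (K * t₀) + ε := Real.sqrt_sq (by positivity)
    have : 0 < d := by
      have := hlb t₀ ht₀T
      simp only [hddef]
      linarith
    linarith
  -- conclude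
  have hTmem : T ∈ Set.Icc (0:ℝ) T := ⟨hT, le_rfl⟩
  by_contra hlt
  push_neg at hlt
  set δ := Real.cos (K * T) - r T with hδdef
  have hδpos : 0 < δ := by linarith
  rcases eq_or_lt_of_le hT with rfl | hTpos
  · rw [mul_zero, Real.cos_zero, h0] at hlt
    exact absurd hlt (lt_irrefl 1)
  · have hm := main (δ / (2 * T)) (by positivity) T hTmem
    have h2 : δ / (2 * T) * T = δ / 2 := by field_simp
    rw [h2] at hm
    simp only [hδdef] at hm
    linarith

end Aux

section Main

open Set Filter Topology

theorem stmt7 (Ts Δbar : ℝ) (hTs : 0 ≤ Ts) (hΔbar : 0 ≤ Δbar)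
    (hbound : Δbar * Ts ≤ Real.pi / 2)
    (H HΔ : ℝ → Matrix (Fin 2) (Fin 2) ℂ)
    (hHcont : Continuous H) (hHΔcont : Continuous HΔ)
    (hHherm : ∀ t ∈ Set.Icc (0 : ℝ) Ts, (H t).IsHermitian)
    (hHΔherm : ∀ t ∈ Set.Icc (0 : ℝ) Ts, (HΔ t).IsHermitian)
    (hHΔnorm : ∀ t ∈ Set.Icc (0 : ℝ) Ts, opNorm (HΔ t) ≤ Δbar)
    (φ ψ : ℝ → EuclideanSpace ℂ (Fin 2))
    (hφ : ∀ t ∈ Set.Icc (0 : ℝ) Ts, HasDerivAt φ ((-Complex.I) • act (H t) (φ t)) t)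
    (hψ : ∀ t ∈ Set.Icc (0 : ℝ) Ts, HasDerivAt ψ
      ((-Complex.I) • act (H t + HΔ t) (ψ t)) t)
    (hinit : φ 0 = ψ 0) (hunit : ‖φ 0‖ = 1) :
    Real.cos (Δbar * Ts) ^ 2 ≤ ‖⟪φ Ts, ψ Ts⟫_ℂ‖ ^ 2 := by
  have h0mem : (0:ℝ) ∈ Set.Icc (0:ℝ) Ts := ⟨le_rfl, hTs⟩
  have hTmem : Ts ∈ Set.Icc (0:ℝ) Ts := ⟨hTs, le_rfl⟩
  -- symmetry of the operators
  have hsym : ∀ (M : Matrix (Fin 2) (Fin 2) ℂ), M.IsHermitian →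
      ∀ x y : EuclideanSpace ℂ (Fin 2), ⟪act M x, y⟫_ℂ = ⟪x, act M y⟫_ℂ :=
    fun M hM x y => (Matrix.isHermitian_iff_isSymmetric.mp hM) x y
  -- act as CLM
  have hact : ∀ (M : Matrix (Fin 2) (Fin 2) ℂ) (v : EuclideanSpace ℂ (Fin 2)),
      act M v = Matrix.toEuclideanCLM (𝕜 := ℂ) M v := by
    intro M v
    rw [act, ← Matrix.coe_toEuclideanCLM_eq_toEuclideanLin]
    rfl
  have hactnorm : ∀ t ∈ Set.Icc (0:ℝ) Ts, ∀ v : EuclideanSpace ℂ (Fin 2),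
      ‖act (HΔ t) v‖ ≤ Δbar * ‖v‖ := by
    intro t ht v
    rw [hact]
    calc ‖Matrix.toEuclideanCLM (𝕜 := ℂ) (HΔ t) v‖
        ≤ ‖Matrix.toEuclideanCLM (𝕜 := ℂ) (HΔ t)‖ * ‖v‖ :=
          ContinuousLinearMap.le_opNorm _ _
      _ ≤ Δbar * ‖v‖ := by
          have := hHΔnorm t ht
          rw [opNorm] at this
          exact mul_le_mul_of_nonneg_right this (norm_nonneg v)
  -- norm conservation
  have norm_const : ∀ (χ : ℝ → EuclideanSpace ℂ (Fin 2))
      (A : ℝ → Matrix (Fin 2) (Fin 2) ℂ),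
      (∀ t ∈ Set.Icc (0:ℝ) Ts, (A t).IsHermitian) →
      (∀ t ∈ Set.Icc (0:ℝ) Ts, HasDerivAt χ ((-Complex.I) • act (A t) (χ t)) t) →
      ∀ t ∈ Set.Icc (0:ℝ) Ts, ‖χ t‖ = ‖χ 0‖ := by
    intro χ A hA hder
    have hF : ∀ t ∈ Set.Icc (0:ℝ) Ts,
        HasDerivAt (fun t => (⟪χ t, χ t⟫_ℂ).re) 0 t := by
      intro t ht
      have h1 := (hder t ht).inner ℂ (hder t ht)
      have h2 : (⟪χ t, (-Complex.I) • act (A t) (χ t)⟫_ℂ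
          + ⟪(-Complex.I) • act (A t) (χ t), χ t⟫_ℂ) = 0 := by
        rw [inner_smul_right, inner_smul_left, hsym (A t) (hA t ht) (χ t) (χ t)]
        simp only [map_neg, Complex.conj_I]
        ring
      have h3 := Complex.reCLM.hasFDerivAt.comp_hasDerivAt t h1
      rw [h2] at h3
      simpa only [Function.comp_def, Complex.reCLM_apply, map_zero] using h3
    have hcont : ContinuousOn (fun t => (⟪χ t, χ t⟫_ℂ).re) (Set.Icc 0 Ts) :=
      fun t ht => ((hF t ht).continuousAt).continuousWithinAt
    have hconst := constant_of_has_deriv_right_zero hcont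
      (fun x hx => ((hF x (Set.Ico_subset_Icc_self hx)).hasDerivWithinAt))
    intro t ht
    have h4 := hconst t ht
    have h5 : ‖χ t‖ ^ 2 = ‖χ 0‖ ^ 2 := by
      rw [← inner_self_eq_norm_sq (𝕜 := ℂ), ← inner_self_eq_norm_sq (𝕜 := ℂ)]
      simpa [RCLike.re_to_complex] using h4
    calc ‖χ t‖ = Real.sqrt (‖χ t‖ ^ 2) := (Real.sqrt_sq (norm_nonneg _)).symm
      _ = Real.sqrt (‖χ 0‖ ^ 2) := by rw [h5]
      _ = ‖χ 0‖ := Real.sqrt_sq (norm_nonneg _)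
  have hφ1 : ∀ t ∈ Set.Icc (0:ℝ) Ts, ‖φ t‖ = 1 := by
    intro t ht
    rw [norm_const φ H hHherm hφ t ht, hunit]
  have hψ1 : ∀ t ∈ Set.Icc (0:ℝ) Ts, ‖ψ t‖ = 1 := by
    intro t ht
    rw [norm_const ψ (fun t => H t + HΔ t)
      (fun t ht => (hHherm t ht).add (hHΔherm t ht)) hψ t ht, ← hinit, hunit]
  -- the overlap function
  set f : ℝ → ℂ := fun t => ⟪φ t, ψ t⟫_ℂ with hfdef
  have hfd : ∀ t ∈ Set.Icc (0:ℝ) Ts,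
      HasDerivAt f (-Complex.I * ⟪φ t, act (HΔ t) (ψ t)⟫_ℂ) t := by
    intro t ht
    have h1 := (hφ t ht).inner ℂ (hψ t ht)
    have hadd : act (H t + HΔ t) (ψ t) = act (H t) (ψ t) + act (HΔ t) (ψ t) := by
      simp [act, map_add]
    have h2 : (⟪φ t, (-Complex.I) • act (H t + HΔ t) (ψ t)⟫_ℂ
        + ⟪(-Complex.I) • act (H t) (φ t), ψ t⟫_ℂ)
        = -Complex.I * ⟪φ t, act (HΔ t) (ψ t)⟫_ℂ := by
      rw [hadd, inner_smul_right, inner_smul_left, hsym (H t) (hHherm t ht) (φ t) (ψ t),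
        inner_add_right]
      simp only [map_neg, Complex.conj_I]
      ring
    rw [← h2]
    exact h1
  -- the real phase function
  set c : ℝ → ℝ := fun t => (⟪ψ t, act (HΔ t) (ψ t)⟫_ℂ).re with hcdef
  have hcreal : ∀ t ∈ Set.Icc (0:ℝ) Ts,
      ((c t : ℝ) : ℂ) = ⟪ψ t, act (HΔ t) (ψ t)⟫_ℂ := by
    intro t ht
    apply Complex.conj_eq_iff_re.mp
    rw [inner_conj_symm]
    exact hsym (HΔ t) (hHΔherm t ht) (ψ t) (ψ t)
  -- continuity of c on Icc
  have hψcont : ContinuousOn ψ (Set.Icc (0:ℝ) Ts) :=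
    fun t ht => ((hψ t ht).continuousAt).continuousWithinAt
  have hCLMcont : Continuous (fun t => Matrix.toEuclideanCLM (𝕜 := ℂ) (HΔ t)) := by
    let L : Matrix (Fin 2) (Fin 2) ℂ →ₗ[ℂ]
        (EuclideanSpace ℂ (Fin 2) →L[ℂ] EuclideanSpace ℂ (Fin 2)) :=
      { toFun := fun M => Matrix.toEuclideanCLM (𝕜 := ℂ) M
        map_add' := fun M N => map_add _ M N
        map_smul' := fun c M => map_smul _ c M }
    exact ((LinearMap.continuous_of_finiteDimensional L).comp hHΔcont).congr fun t => rfl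
  have hccont : ContinuousOn c (Set.Icc (0:ℝ) Ts) := by
    have h1 : ContinuousOn (fun t => act (HΔ t) (ψ t)) (Set.Icc (0:ℝ) Ts) := by
      have := (hCLMcont.continuousOn (s := Set.Icc (0:ℝ) Ts)).clm_apply hψcont
      refine this.congr fun t ht => hact (HΔ t) (ψ t)
    exact Complex.continuous_re.comp_continuousOn (hψcont.inner h1)
  -- clamp
  set u : ℝ → ℝ := fun t => max 0 (min t Ts) with hudef
  have hucont : Continuous u := continuous_const.max (continuous_id.min continuous_const)
  have humem : ∀ t, u t ∈ Set.Icc (0:ℝ) Ts :=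
    fun t => ⟨le_max_left _ _, max_le hTs (min_le_right _ _)⟩
  have hueq : ∀ t ∈ Set.Icc (0:ℝ) Ts, u t = t := by
    intro t ht
    simp only [hudef]
    rw [min_eq_left ht.2, max_eq_right ht.1]
  set ctil : ℝ → ℝ := fun t => c (u t) with hctildef
  have hctilcont : Continuous ctil := hccont.comp_continuous hucont humem
  have hctileq : ∀ t ∈ Set.Icc (0:ℝ) Ts, ctil t = c t := by
    intro t ht
    simp only [hctildef]
    rw [hueq t ht]
  set θ : ℝ → ℝ := fun t => ∫ s in (0:ℝ)..t, ctil s with hθdef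
  have hθd : ∀ t : ℝ, HasDerivAt θ (ctil t) t :=
    fun t => (hctilcont.integral_hasStrictDerivAt 0 t).hasDerivAt
  set p : ℝ → ℂ := fun t => Complex.exp (Complex.I * (θ t : ℂ)) with hpdef
  have hpd : ∀ t : ℝ, HasDerivAt p (p t * (Complex.I * (ctil t : ℂ))) t := by
    intro t
    have h1 : HasDerivAt (fun t => ((θ t : ℝ) : ℂ)) ((ctil t : ℂ)) t := by
      simpa [Function.comp_def] using Complex.ofRealCLM.hasFDerivAt.comp_hasDerivAt t (hθd t)
    exact (h1.const_mul Complex.I).cexp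
  have hpnorm : ∀ t, ‖p t‖ = 1 := by
    intro t
    simp only [hpdef]
    rw [Complex.norm_exp]
    simp
  -- the phase-corrected overlap and its real part
  set g : ℝ → ℂ := fun t => ⟪φ t, act (HΔ t) (ψ t)⟫_ℂ - (c t : ℂ) * f t with hgdef
  set r : ℝ → ℝ := fun t => (p t * f t).re with hrdef
  set r' : ℝ → ℝ := fun t => (-Complex.I * p t * g t).re with hr'def
  have hrd : ∀ t ∈ Set.Icc (0:ℝ) Ts, HasDerivAt r (r' t) t := by
    intro t ht
    have h1 := (hpd t).mul (hfd t ht)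
    have h2 : p t * (Complex.I * (ctil t : ℂ)) * f t
        + p t * (-Complex.I * ⟪φ t, act (HΔ t) (ψ t)⟫_ℂ) = -Complex.I * p t * g t := by
      rw [hctileq t ht]
      simp only [hgdef]
      ring
    rw [h2] at h1
    have h3 := Complex.reCLM.hasFDerivAt.comp_hasDerivAt t h1
    simpa only [Function.comp_def, Pi.mul_apply, Complex.reCLM_apply] using h3
  -- bound on the derivative
  have hbound' : ∀ t ∈ Set.Icc (0:ℝ) Ts, |r' t| ≤ Δbar * Real.sqrt (1 - r t ^ 2) := by
    intro t ht
    have hg_eq : g t = ⟪φ t - (starRingEnd ℂ) (f t) • ψ t, act (HΔ t) (ψ t)⟫_ℂ := by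
      rw [inner_sub_left, inner_smul_left]
      simp only [hgdef, RingHomCompTriple.comp_apply, RingHom.id_apply,
        starRingEnd_self_apply]
      rw [← hcreal t ht]
      ring
    have hperp : ‖φ t - (starRingEnd ℂ) (f t) • ψ t‖
        = Real.sqrt (1 - ‖f t‖ ^ 2) := by
      have hsq : ‖φ t - (starRingEnd ℂ) (f t) • ψ t‖ ^ 2 = 1 - ‖f t‖ ^ 2 := by
        rw [norm_sub_sq (𝕜 := ℂ)]
        have h1 : ⟪φ t, (starRingEnd ℂ) (f t) • ψ t⟫_ℂ = (starRingEnd ℂ) (f t) * f t := by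
          rw [inner_smul_right]
        have h2 : (RCLike.re (⟪φ t, (starRingEnd ℂ) (f t) • ψ t⟫_ℂ) : ℝ) = ‖f t‖ ^ 2 := by
          have h2' : (starRingEnd ℂ) (f t) * f t = ((Complex.normSq (f t) : ℝ) : ℂ) := by
            rw [mul_comm, Complex.mul_conj]
          rw [h1, h2']
          simp only [RCLike.re_to_complex, Complex.ofReal_re]
          rw [Complex.normSq_eq_norm_sq]
        rw [h2, norm_smul, hφ1 t ht, hψ1 t ht]
        simp only [RCLike.norm_conj]
        ring
      rw [← hsq, Real.sqrt_sq (norm_nonneg _)]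
    have hstep : ‖g t‖ ≤ Δbar * Real.sqrt (1 - ‖f t‖ ^ 2) := by
      rw [hg_eq]
      calc ‖⟪φ t - (starRingEnd ℂ) (f t) • ψ t, act (HΔ t) (ψ t)⟫_ℂ‖
          ≤ ‖φ t - (starRingEnd ℂ) (f t) • ψ t‖ * ‖act (HΔ t) (ψ t)‖ :=
            norm_inner_le_norm _ _
        _ ≤ ‖φ t - (starRingEnd ℂ) (f t) • ψ t‖ * (Δbar * ‖ψ t‖) := by
            apply mul_le_mul_of_nonneg_left (hactnorm t ht (ψ t)) (norm_nonneg _)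
        _ = Δbar * Real.sqrt (1 - ‖f t‖ ^ 2) := by
            rw [hψ1 t ht, hperp]; ring
    have habs : |r' t| ≤ ‖g t‖ := by
      calc |r' t| ≤ ‖-Complex.I * p t * g t‖ := Complex.abs_re_le_norm _
        _ = ‖g t‖ := by
          simp only [norm_mul, norm_neg, Complex.norm_I, hpnorm t]
          ring
    have hmono : Real.sqrt (1 - ‖f t‖ ^ 2) ≤ Real.sqrt (1 - r t ^ 2) := by
      apply Real.sqrt_le_sqrt
      have : |r t| ≤ ‖f t‖ := by
        calc |r t| ≤ ‖p t * f t‖ := Complex.abs_re_le_norm _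
          _ = ‖f t‖ := by rw [norm_mul, hpnorm t, one_mul]
      nlinarith [abs_nonneg (r t), sq_abs (r t)]
    calc |r' t| ≤ ‖g t‖ := habs
      _ ≤ Δbar * Real.sqrt (1 - ‖f t‖ ^ 2) := hstep
      _ ≤ Δbar * Real.sqrt (1 - r t ^ 2) := mul_le_mul_of_nonneg_left hmono hΔbar
  -- initial value
  have hr0 : r 0 = 1 := by
    have hθ0 : θ 0 = 0 := intervalIntegral.integral_same
    simp only [hrdef, hpdef, hfdef, hθ0]
    rw [hinit]
    simp only [Complex.ofReal_zero, mul_zero, Complex.exp_zero, one_mul]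
    have h6 : RCLike.re (⟪ψ 0, ψ 0⟫_ℂ) = 1 := by
      rw [inner_self_eq_norm_sq (𝕜 := ℂ), ← hinit, hunit]; norm_num
    simpa only [RCLike.re_to_complex] using h6
  -- apply the comparison lemma
  have hcomp := comparison Δbar Ts hΔbar hTs hbound r r' hrd
    (fun t ht => by
      have := hbound' t ht
      have h2 := neg_abs_le (r' t)
      linarith [abs_le.mp (hbound' t ht)]) hr0
  -- conclude
  have hcos0 : 0 ≤ Real.cos (Δbar * Ts) := by
    apply Real.cos_nonneg_of_mem_Icc
    constructor
    · linarith [mul_nonneg hΔbar hTs, Real.pi_pos]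
    · exact hbound
  have hfinal : Real.cos (Δbar * Ts) ≤ ‖f Ts‖ := by
    calc Real.cos (Δbar * Ts) ≤ r Ts := hcomp
      _ ≤ |r Ts| := le_abs_self _
      _ ≤ ‖p Ts * f Ts‖ := Complex.abs_re_le_norm _
      _ = ‖f Ts‖ := by rw [norm_mul, hpnorm Ts, one_mul]
  calc Real.cos (Δbar * Ts) ^ 2 ≤ ‖f Ts‖ ^ 2 := by
        apply pow_le_pow_left₀ hcos0 hfinal
    _ = ‖⟪φ Ts, ψ Ts⟫_ℂ‖ ^ 2 := rfl

end Main
end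

section
/- Let T_s ≥ 0, Δ̄ ≥ 0 and γ̄ ≥ 0 with Δ̄·T_s < π/2. Let H : ℝ → (2×2 complex matrices) and H_Δ : ℝ → (2×2 complex matrices) be continuous with H(t) and H_Δ(t) Hermitian and ‖H_Δ(t)‖ ≤ Δ̄ for all t ∈ [0, T_s], where ‖·‖ is the operator norm induced by the Euclidean norm on ℂ², and let γ : ℝ → ℝ be continuous with 0 ≤ γ(t) ≤ γ̄ for all t ∈ [0, T_s]. Suppose φ, ψ : ℝ → ℂ² satisfy, for all t ∈ [0, T_s], the derivative conditions φ'(t) = -i H(t) φ(t) and ψ'(t) = -i (H(t) + H_Δ(t)) ψ(t) - (1/2) γ(t) ψ(t), with φ(0) = ψ(0) a unit vector. Then |⟨φ(T_s), ψ(T_s)⟩|² ≥ cos²(Δ̄ T_s)·exp(-γ̄ T_s). -/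
open scoped InnerProductSpace

lemma act_add {n : ℕ} (M N : Matrix (Fin n) (Fin n) ℂ) (v : EuclideanSpace ℂ (Fin n)) :
    act (M + N) v = act M v + act N v := by
  unfold act; rw [map_add]; rfl

lemma act_add_vec {n : ℕ} (M : Matrix (Fin n) (Fin n) ℂ) (u v : EuclideanSpace ℂ (Fin n)) :
    act M (u + v) = act M u + act M v := map_add (Matrix.toEuclideanLin M) u v

lemma act_smul {n : ℕ} (M : Matrix (Fin n) (Fin n) ℂ) (c : ℂ) (v : EuclideanSpace ℂ (Fin n)) :
    act M (c • v) = c • act M v := map_smul (Matrix.toEuclideanLin M) c v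

lemma act_norm_le {n : ℕ} (M : Matrix (Fin n) (Fin n) ℂ) (v : EuclideanSpace ℂ (Fin n)) :
    ‖act M v‖ ≤ opNorm M * ‖v‖ := by
  have h : act M v = Matrix.toEuclideanCLM (𝕜 := ℂ) (n := Fin n) M v := by
    rw [show (Matrix.toEuclideanCLM (𝕜 := ℂ) (n := Fin n) M v)
      = (Matrix.toEuclideanCLM (𝕜 := ℂ) (n := Fin n) M : _ →ₗ[ℂ] _) v from rfl,
      Matrix.coe_toEuclideanCLM_eq_toEuclideanLin]
    rfl
  rw [h]
  exact (Matrix.toEuclideanCLM (𝕜 := ℂ) (n := Fin n) M).le_opNorm v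

lemma act_inner_symm {n : ℕ} {M : Matrix (Fin n) (Fin n) ℂ} (hM : M.IsHermitian)
    (x y : EuclideanSpace ℂ (Fin n)) : ⟪act M x, y⟫_ℂ = ⟪x, act M y⟫_ℂ := by
  have h := Matrix.toEuclideanLin_conjTranspose_eq_adjoint M
  rw [hM.eq] at h
  show ⟪Matrix.toEuclideanLin M x, y⟫_ℂ = ⟪x, Matrix.toEuclideanLin M y⟫_ℂ
  rw [h, LinearMap.adjoint_inner_left, ← h]

lemma act_inner_self_im {n : ℕ} {M : Matrix (Fin n) (Fin n) ℂ} (hM : M.IsHermitian)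
    (x : EuclideanSpace ℂ (Fin n)) : (⟪x, act M x⟫_ℂ).im = 0 := by
  have h1 : (starRingEnd ℂ) ⟪x, act M x⟫_ℂ = ⟪x, act M x⟫_ℂ := by
    rw [inner_conj_symm]
    exact act_inner_symm hM x x
  exact Complex.conj_eq_iff_im.mp h1

lemma inner_re_hasDerivAt {E : Type*} [NormedAddCommGroup E] [InnerProductSpace ℂ E]
    {f g : ℝ → E} {f' g' : E} {x : ℝ} (hf : HasDerivAt f f' x) (hg : HasDerivAt g g' x) :
    HasDerivAt (fun t => (⟪f t, g t⟫_ℂ).re) (⟪f x, g'⟫_ℂ + ⟪f', g x⟫_ℂ).re x := by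
  have h1 := Complex.reCLM.hasFDerivAt.comp_hasDerivAt x (HasDerivAt.inner ℂ hf hg)
  exact h1

lemma inner_self_re {E : Type*} [NormedAddCommGroup E] [InnerProductSpace ℂ E]
    (v : E) : (⟪v, v⟫_ℂ).re = ‖v‖ ^ 2 := by
  rw [inner_self_eq_norm_sq_to_K]
  norm_cast

lemma real_smul_eq_complex_smul {E : Type*} [AddCommGroup E] [Module ℂ E] [Module ℝ E]
    [IsScalarTower ℝ ℂ E] (r : ℝ) (v : E) : r • v = (Complex.ofReal r) • v :=
  RCLike.real_smul_eq_coe_smul (K := ℂ) r v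

lemma cplx1 (z : ℂ) (hz : z.im = 0) :
    ((-Complex.I) * z + (starRingEnd ℂ) (-Complex.I) * (starRingEnd ℂ) z).re = 0 := by
  simp [Complex.mul_re, hz]

lemma cplx2 (z w c : ℂ) (hz : z.im = 0) (hw : w.im = 0) (hc : c.im = 0) :
    (((-Complex.I) * z - c * w)
      + ((starRingEnd ℂ) (-Complex.I) * (starRingEnd ℂ) z - (starRingEnd ℂ) c * w)).re
      = -(2 * c.re) * w.re := by
  simp [Complex.mul_re, Complex.conj_re, Complex.conj_im, hz, hw, hc]
  ring

lemma cplx3 (z v : ℂ) : ((starRingEnd ℂ) z * v + (starRingEnd ℂ) v * z).re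
    = 2 * ((starRingEnd ℂ) z * v).re := by
  simp [Complex.mul_re]
  ring

lemma cplx4 (r : ℝ) (a : ℂ) (ha : a.im = 0) :
    (-Complex.I * ((r : ℝ) : ℂ) * a).re = 0 := by
  simp [Complex.mul_re, Complex.mul_im, ha]
set_option maxHeartbeats 1000000 in
theorem stmt8 (Ts Δbar γbar : ℝ) (hTs : 0 ≤ Ts) (hΔbar : 0 ≤ Δbar) (hγbar : 0 ≤ γbar)
    (hbound : Δbar * Ts < Real.pi / 2)
    (H HΔ : ℝ → Matrix (Fin 2) (Fin 2) ℂ)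
    (hHcont : Continuous H) (hHΔcont : Continuous HΔ)
    (hHherm : ∀ t ∈ Set.Icc (0 : ℝ) Ts, (H t).IsHermitian)
    (hHΔherm : ∀ t ∈ Set.Icc (0 : ℝ) Ts, (HΔ t).IsHermitian)
    (hHΔnorm : ∀ t ∈ Set.Icc (0 : ℝ) Ts, opNorm (HΔ t) ≤ Δbar)
    (γ : ℝ → ℝ) (hγcont : Continuous γ)
    (hγ : ∀ t ∈ Set.Icc (0 : ℝ) Ts, 0 ≤ γ t ∧ γ t ≤ γbar)
    (φ ψ : ℝ → EuclideanSpace ℂ (Fin 2))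
    (hφ : ∀ t ∈ Set.Icc (0 : ℝ) Ts, HasDerivAt φ ((-Complex.I) • act (H t) (φ t)) t)
    (hψ : ∀ t ∈ Set.Icc (0 : ℝ) Ts, HasDerivAt ψ
      ((-Complex.I) • act (H t + HΔ t) (ψ t) - (1 / 2 * γ t) • ψ t) t)
    (hinit : φ 0 = ψ 0) (hunit : ‖φ 0‖ = 1) :
    Real.cos (Δbar * Ts) ^ 2 * Real.exp (-(γbar * Ts)) ≤ ‖⟪φ Ts, ψ Ts⟫_ℂ‖ ^ 2 := by
  -- the accumulated dissipation and its exponential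
  set E : ℝ → ℝ := fun t => ∫ s in (0:ℝ)..t, γ s with hEdef
  have hE : ∀ t, HasDerivAt E (γ t) t := by
    intro t
    exact intervalIntegral.integral_hasDerivAt_right (hγcont.intervalIntegrable 0 t)
      hγcont.stronglyMeasurable.stronglyMeasurableAtFilter hγcont.continuousAt
  set G : ℝ → ℝ := fun t => Real.exp (E t / 2) with hGdef
  have hGpos : ∀ t, 0 < G t := fun t => Real.exp_pos _
  have hG : ∀ t, HasDerivAt G (γ t / 2 * G t) t := by
    intro t
    have h1 := ((hE t).div_const 2).exp
    simpa [hGdef, mul_comm] using h1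
  have hE0 : E 0 = 0 := intervalIntegral.integral_same
  have hG0 : G 0 = 1 := by simp [hGdef, hE0]
  -- the norm of φ is constantly 1
  have hφnorm : ∀ t ∈ Set.Icc (0:ℝ) Ts, ‖φ t‖ = 1 := by
    have hconst : ∀ t ∈ Set.Icc (0:ℝ) Ts,
        (fun t => (⟪φ t, φ t⟫_ℂ).re) t = (fun t => (⟪φ t, φ t⟫_ℂ).re) 0 := by
      apply constant_of_has_deriv_right_zero
      · intro x hx
        exact (inner_re_hasDerivAt (hφ x hx) (hφ x hx)).continuousAt.continuousWithinAt
      · intro x hx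
        have hx' : x ∈ Set.Icc (0:ℝ) Ts := Set.Ico_subset_Icc_self hx
        have h1 := inner_re_hasDerivAt (hφ x hx') (hφ x hx')
        have him := act_inner_self_im (hHherm x hx') (φ x)
        have h2 : (⟪φ x, (-Complex.I) • act (H x) (φ x)⟫_ℂ
            + ⟪(-Complex.I) • act (H x) (φ x), φ x⟫_ℂ).re = 0 := by
          rw [inner_smul_right, inner_smul_left, ← inner_conj_symm (act (H x) (φ x)) (φ x)]
          exact cplx1 _ him
        rw [h2] at h1
        exact h1.hasDerivWithinAt
    intro t ht
    have h3 := hconst t ht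
    simp only [inner_self_re] at h3
    nlinarith [norm_nonneg (φ t), hunit]
  -- G t * ‖ψ t‖ is constantly 1
  have hψnorm : ∀ t ∈ Set.Icc (0:ℝ) Ts, G t * ‖ψ t‖ = 1 := by
    have hconst : ∀ t ∈ Set.Icc (0:ℝ) Ts,
        (fun t => G t ^ 2 * (⟪ψ t, ψ t⟫_ℂ).re) t
          = (fun t => G t ^ 2 * (⟪ψ t, ψ t⟫_ℂ).re) 0 := by
      apply constant_of_has_deriv_right_zero
      · intro x hx
        exact (((hG x).pow 2).mul
          (inner_re_hasDerivAt (hψ x hx) (hψ x hx))).continuousAt.continuousWithinAt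
      · intro x hx
        have hx' : x ∈ Set.Icc (0:ℝ) Ts := Set.Ico_subset_Icc_self hx
        have h1 := ((hG x).pow 2).mul (inner_re_hasDerivAt (hψ x hx') (hψ x hx'))
        have him : (⟪ψ x, act (H x + HΔ x) (ψ x)⟫_ℂ).im = 0 :=
          act_inner_self_im ((hHherm x hx').add (hHΔherm x hx')) (ψ x)
        have h2 : (⟪ψ x, (-Complex.I) • act (H x + HΔ x) (ψ x)
              - (1 / 2 * γ x) • ψ x⟫_ℂ
            + ⟪(-Complex.I) • act (H x + HΔ x) (ψ x) - (1 / 2 * γ x) • ψ x, ψ x⟫_ℂ).re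
            = -(γ x) * (⟪ψ x, ψ x⟫_ℂ).re := by
          have hw0 : (⟪ψ x, ψ x⟫_ℂ).im = 0 := by
            rw [inner_self_eq_norm_sq_to_K]
            norm_cast
          rw [real_smul_eq_complex_smul]
          rw [inner_sub_right, inner_sub_left, inner_smul_right, inner_smul_left,
            inner_smul_right, inner_smul_left, ← inner_conj_symm (act (H x + HΔ x) (ψ x)) (ψ x)]
          rw [cplx2 _ _ _ him hw0 (by norm_cast)]
          rw [Complex.ofReal_re]
          ring
        have h1' : HasDerivAt (fun t => G t ^ 2 * (⟪ψ t, ψ t⟫_ℂ).re) 0 x := by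
          refine HasDerivAt.congr_deriv h1 ?_
          rw [h2, Pi.pow_apply]
          push_cast
          ring
        exact h1'.hasDerivWithinAt
    intro t ht
    have h3 := hconst t ht
    simp only [inner_self_re] at h3
    rw [hG0, ← hinit] at h3
    have h4 : G t ^ 2 * ‖ψ t‖ ^ 2 = 1 := by rw [h3, hunit]; ring
    nlinarith [norm_nonneg (ψ t), (hGpos t).le, mul_nonneg (hGpos t).le (norm_nonneg (ψ t))]
  -- the rescaled overlap g and its derivative
  set g : ℝ → ℂ := fun t => ((G t : ℝ) : ℂ) * ⟪φ t, ψ t⟫_ℂ with hgdef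
  set gd : ℝ → ℂ := fun t => (-Complex.I) * ((G t : ℝ) : ℂ) * ⟪φ t, act (HΔ t) (ψ t)⟫_ℂ
    with hgddef
  have hg' : ∀ t ∈ Set.Icc (0:ℝ) Ts, HasDerivAt g (gd t) t := by
    intro t ht
    have h1 := ((hG t).ofReal_comp).mul (HasDerivAt.inner ℂ (hφ t ht) (hψ t ht))
    have key : (((γ t / 2 * G t : ℝ)) : ℂ) * ⟪φ t, ψ t⟫_ℂ
        + ((G t : ℝ) : ℂ) * (⟪φ t, (-Complex.I) • act (H t + HΔ t) (ψ t)
            - (1 / 2 * γ t) • ψ t⟫_ℂ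
          + ⟪(-Complex.I) • act (H t) (φ t), ψ t⟫_ℂ) = gd t := by
      rw [real_smul_eq_complex_smul (1/2 * γ t)]
      rw [inner_sub_right, inner_smul_right, inner_smul_right, inner_smul_left,
        act_add, inner_add_right, map_neg, Complex.conj_I,
        act_inner_symm (hHherm t ht) (φ t) (ψ t), hgddef]
      push_cast
      ring
    rw [key] at h1
    exact h1
  have hh' : ∀ t ∈ Set.Icc (0:ℝ) Ts, HasDerivAt (fun t => (⟪g t, g t⟫_ℂ).re)
      ((⟪g t, gd t⟫_ℂ + ⟪gd t, g t⟫_ℂ).re) t :=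
    fun t ht => inner_re_hasDerivAt (hg' t ht) (hg' t ht)
  have hg0 : g 0 = 1 := by
    simp only [hgdef]
    rw [hG0, ← hinit, inner_self_eq_norm_sq_to_K, hunit]
    norm_num
  -- the fencing argument, for every small ε > 0
  have hcomp : ∀ ε : ℝ, 0 < ε → (Δbar + ε) * Ts + ε < Real.pi / 2 →
      Real.cos ((Δbar + ε) * Ts + ε) ^ 2 ≤ (⟪g Ts, g Ts⟫_ℂ).re := by
    intro ε hε hεb
    set F : ℝ → ℝ := fun t => Real.cos ((Δbar + ε) * t + ε) ^ 2 with hFdef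
    set F' : ℝ → ℝ := fun t => (2:ℕ) * Real.cos ((Δbar + ε) * t + ε) ^ 1
      * (-Real.sin ((Δbar + ε) * t + ε) * (Δbar + ε)) with hF'def
    have hF : ∀ x : ℝ, HasDerivAt F (F' x) x := by
      intro x
      have hl : HasDerivAt (fun t : ℝ => (Δbar + ε) * t + ε) (Δbar + ε) x := by
        simpa using ((hasDerivAt_id x).const_mul (Δbar + ε)).add_const ε
      have hc : HasDerivAt (fun t : ℝ => Real.cos ((Δbar + ε) * t + ε))
          (-Real.sin ((Δbar + ε) * x + ε) * (Δbar + ε)) x := by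
        exact (Real.hasDerivAt_cos ((Δbar + ε) * x + ε)).comp x hl
      exact hc.pow 2
    have hF0 : F 0 ≤ (⟪g 0, g 0⟫_ℂ).re := by
      rw [hg0]
      have h1 : F 0 ≤ 1 := by
        simp only [hFdef]
        nlinarith [Real.cos_le_one ((Δbar + ε) * 0 + ε), Real.neg_one_le_cos ((Δbar + ε) * 0 + ε)]
      have h2 : (⟪(1:ℂ), (1:ℂ)⟫_ℂ).re = 1 := by simp [RCLike.inner_apply]
      rw [h2]
      exact h1
    have hlt : ∀ x ∈ Set.Ico (0:ℝ) Ts, F x = (⟪g x, g x⟫_ℂ).re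
        → F' x < (⟪g x, gd x⟫_ℂ + ⟪gd x, g x⟫_ℂ).re := by
      intro x hx hFx
      have hx' : x ∈ Set.Icc (0:ℝ) Ts := Set.Ico_subset_Icc_self hx
      set s : ℝ := (Δbar + ε) * x + ε with hsdef
      have hs0 : 0 < s := by
        have : 0 ≤ (Δbar + ε) * x := mul_nonneg (by linarith) hx.1
        simp only [hsdef]; linarith
      have hs2 : s < Real.pi / 2 := by
        have h5 : (Δbar + ε) * x ≤ (Δbar + ε) * Ts :=
          mul_le_mul_of_nonneg_left hx.2.le (by linarith)
        simp only [hsdef]; linarith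
      have hcoss : 0 < Real.cos s :=
        Real.cos_pos_of_mem_Ioo ⟨by linarith [Real.pi_pos], hs2⟩
      have hsins : 0 < Real.sin s :=
        Real.sin_pos_of_pos_of_lt_pi hs0 (by linarith [Real.pi_pos])
      -- the norm of g x equals cos s
      have hgx2 : ‖g x‖ ^ 2 = Real.cos s ^ 2 := by
        rw [← inner_self_re (g x), ← hFx]
      have hgx : ‖g x‖ = Real.cos s := by
        have h2 : (‖g x‖ - Real.cos s) * (‖g x‖ + Real.cos s) = 0 := by
          linear_combination hgx2
        rcases mul_eq_zero.mp h2 with h3 | h3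
        · linarith
        · nlinarith [norm_nonneg (g x)]
      -- the normalized ψ and the orthogonal decomposition
      set ψt : EuclideanSpace ℂ (Fin 2) := ((G x : ℝ) : ℂ) • ψ x with hψtdef
      have hψtn : ‖ψt‖ = 1 := by
        simp only [hψtdef]
        rw [norm_smul, Complex.norm_real, Real.norm_eq_abs, abs_of_pos (hGpos x)]
        exact hψnorm x hx'
      have hgin : ⟪φ x, ψt⟫_ℂ = g x := by
        simp only [hψtdef, hgdef]
        rw [inner_smul_right]
      have hφx1 : ⟪φ x, φ x⟫_ℂ = 1 := by
        rw [inner_self_eq_norm_sq_to_K, hφnorm x hx']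
        norm_num
      set w : EuclideanSpace ℂ (Fin 2) := ψt - g x • φ x with hwdef
      have hwn2 : ‖w‖ ^ 2 = Real.sin s ^ 2 := by
        have h9 := @norm_sub_sq ℂ _ _ _ _ ψt (g x • φ x)
        rw [inner_smul_right, ← inner_conj_symm ψt (φ x), hgin] at h9
        have h10 : g x * (starRingEnd ℂ) (g x) = ((Real.cos s ^ 2 : ℝ) : ℂ) := by
          rw [Complex.mul_conj]
          norm_cast
          rw [Complex.normSq_eq_norm_sq, hgx]
        rw [h10] at h9
        have h11 : ‖g x • φ x‖ = Real.cos s := by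
          rw [norm_smul, hφnorm x hx', hgx, mul_one]
        rw [h11, hψtn] at h9
        simp only [hwdef]
        rw [h9]
        have := Real.sin_sq_add_cos_sq s
        have hre : RCLike.re (((Real.cos s ^ 2 : ℝ) : ℂ)) = Real.cos s ^ 2 := by
          norm_cast
        rw [hre]
        nlinarith
      have hwn : ‖w‖ = Real.sin s := by
        have h2 : (‖w‖ - Real.sin s) * (‖w‖ + Real.sin s) = 0 := by
          linear_combination hwn2
        rcases mul_eq_zero.mp h2 with h3 | h3
        · linarith
        · nlinarith [norm_nonneg w]
      have hdecomp : ψt = g x • φ x + w := by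
        simp only [hwdef]
        abel
      have haim : (⟪φ x, act (HΔ x) (φ x)⟫_ℂ).im = 0 :=
        act_inner_self_im (hHΔherm x hx') (φ x)
      have hbnorm : ‖⟪φ x, act (HΔ x) w⟫_ℂ‖ ≤ Δbar * Real.sin s := by
        calc ‖⟪φ x, act (HΔ x) w⟫_ℂ‖ ≤ ‖φ x‖ * ‖act (HΔ x) w‖ := norm_inner_le_norm _ _
          _ = ‖act (HΔ x) w‖ := by rw [hφnorm x hx', one_mul]
          _ ≤ opNorm (HΔ x) * ‖w‖ := act_norm_le _ _
          _ ≤ Δbar * Real.sin s :=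
              mul_le_mul (hHΔnorm x hx') hwn.le (norm_nonneg w) hΔbar
      have hgdx : gd x = -Complex.I * (g x * ⟪φ x, act (HΔ x) (φ x)⟫_ℂ
          + ⟪φ x, act (HΔ x) w⟫_ℂ) := by
        simp only [hgddef]
        have h11 : ((G x : ℝ) : ℂ) * ⟪φ x, act (HΔ x) (ψ x)⟫_ℂ
            = ⟪φ x, act (HΔ x) ψt⟫_ℂ := by
          rw [hψtdef, act_smul, inner_smul_right]
        rw [mul_assoc, h11, hdecomp, act_add_vec, act_smul, inner_add_right, inner_smul_right]
      have hDval : (⟪g x, gd x⟫_ℂ + ⟪gd x, g x⟫_ℂ).re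
          = 2 * ((starRingEnd ℂ) (g x) * gd x).re := by
        rw [RCLike.inner_apply, RCLike.inner_apply, mul_comm (gd x), mul_comm (g x)]
        exact cplx3 _ _
      have hterm1 : (-Complex.I * ((starRingEnd ℂ) (g x) * g x)
          * ⟪φ x, act (HΔ x) (φ x)⟫_ℂ).re = 0 := by
        have h13 : (starRingEnd ℂ) (g x) * g x = ((‖g x‖ ^ 2 : ℝ) : ℂ) := by
          rw [mul_comm, Complex.mul_conj]
          norm_cast
          rw [Complex.normSq_eq_norm_sq]
        rw [h13]
        exact cplx4 _ _ haim
      have hterm2 : -(Real.cos s * (Δbar * Real.sin s))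
          ≤ (-Complex.I * ((starRingEnd ℂ) (g x) * ⟪φ x, act (HΔ x) w⟫_ℂ)).re := by
        set z : ℂ := -Complex.I * ((starRingEnd ℂ) (g x) * ⟪φ x, act (HΔ x) w⟫_ℂ) with hzdef
        have h14 : ‖z‖ = ‖g x‖ * ‖⟪φ x, act (HΔ x) w⟫_ℂ‖ := by
          rw [hzdef, norm_mul, norm_mul, norm_neg, Complex.norm_I, one_mul, RCLike.norm_conj]
        have h15 : ‖z‖ ≤ Real.cos s * (Δbar * Real.sin s) := by
          rw [h14, hgx]
          exact mul_le_mul_of_nonneg_left hbnorm hcoss.le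
        have h16 : -‖z‖ ≤ z.re := by
          have := Complex.abs_re_le_norm z
          cases abs_le.mp this with
          | intro hl hr => linarith
        linarith
      have hmain : -(2 * Real.cos s * (Δbar * Real.sin s))
          ≤ 2 * ((starRingEnd ℂ) (g x) * gd x).re := by
        rw [hgdx]
        have hsplit : (starRingEnd ℂ) (g x) * (-Complex.I * (g x * ⟪φ x, act (HΔ x) (φ x)⟫_ℂ
            + ⟪φ x, act (HΔ x) w⟫_ℂ))
            = -Complex.I * ((starRingEnd ℂ) (g x) * g x) * ⟪φ x, act (HΔ x) (φ x)⟫_ℂ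
              + -Complex.I * ((starRingEnd ℂ) (g x) * ⟪φ x, act (HΔ x) w⟫_ℂ) := by ring
        rw [hsplit, Complex.add_re, hterm1]
        linarith
      rw [hDval]
      simp only [hF'def]
      rw [← hsdef]
      have hprod : 0 < Real.cos s * Real.sin s := mul_pos hcoss hsins
      push_cast
      nlinarith
    have hfence := image_le_of_deriv_right_lt_deriv_boundary'
      (f := F) (f' := F') (B := fun t => (⟪g t, g t⟫_ℂ).re)
      (B' := fun t => (⟪g t, gd t⟫_ℂ + ⟪gd t, g t⟫_ℂ).re)
      (fun x _ => (hF x).continuousAt.continuousWithinAt)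
      (fun x _ => (hF x).hasDerivWithinAt) hF0
      (fun x hx => (hh' x hx).continuousAt.continuousWithinAt)
      (fun x hx => (hh' x (Set.Ico_subset_Icc_self hx)).hasDerivWithinAt) hlt
    exact hfence (Set.right_mem_Icc.mpr hTs)
  -- pass to the limit ε → 0⁺
  have hlim : Real.cos (Δbar * Ts) ^ 2 ≤ (⟪g Ts, g Ts⟫_ℂ).re := by
    have hδpos : 0 < (Real.pi / 2 - Δbar * Ts) / (Ts + 1) :=
      div_pos (by linarith) (by linarith)
    have hev : ∀ᶠ ε in nhdsWithin (0:ℝ) (Set.Ioi 0),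
        Real.cos ((Δbar + ε) * Ts + ε) ^ 2 ≤ (⟪g Ts, g Ts⟫_ℂ).re := by
      have hmem : ∀ᶠ ε in nhdsWithin (0:ℝ) (Set.Ioi 0),
          ε ∈ Set.Iio ((Real.pi / 2 - Δbar * Ts) / (Ts + 1)) :=
        Filter.Eventually.filter_mono nhdsWithin_le_nhds (isOpen_Iio.eventually_mem hδpos)
      filter_upwards [self_mem_nhdsWithin, hmem] with ε hε1 hε2
      apply hcomp ε hε1
      have h14 : ε * (Ts + 1) < ((Real.pi / 2 - Δbar * Ts) / (Ts + 1)) * (Ts + 1) :=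
        mul_lt_mul_of_pos_right hε2 (by linarith)
      rw [div_mul_cancel₀ _ (by linarith : Ts + 1 ≠ 0)] at h14
      nlinarith
    have htend : Filter.Tendsto (fun ε : ℝ => Real.cos ((Δbar + ε) * Ts + ε) ^ 2)
        (nhdsWithin (0:ℝ) (Set.Ioi 0)) (nhds (Real.cos ((Δbar + 0) * Ts + 0) ^ 2)) := by
      apply Filter.Tendsto.mono_left _ nhdsWithin_le_nhds
      exact Continuous.tendsto (by fun_prop) 0
    have h15 := le_of_tendsto htend hev
    simpa using h15
  -- conclusion
  have hGTs2 : G Ts ^ 2 = Real.exp (E Ts) := by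
    simp only [hGdef]
    rw [sq, ← Real.exp_add]
    congr 1
    ring
  have hgTsnorm : (⟪g Ts, g Ts⟫_ℂ).re = Real.exp (E Ts) * ‖⟪φ Ts, ψ Ts⟫_ℂ‖ ^ 2 := by
    rw [inner_self_re]
    simp only [hgdef]
    rw [norm_mul, Complex.norm_real, Real.norm_eq_abs, abs_of_pos (hGpos Ts), mul_pow, hGTs2]
  have hETs : E Ts ≤ γbar * Ts := by
    have h16 := intervalIntegral.integral_mono_on (μ := MeasureTheory.volume) (a := 0)
      (b := Ts) hTs (hγcont.intervalIntegrable 0 Ts) intervalIntegrable_const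
      (fun x hx => (hγ x hx).2)
    simp only [intervalIntegral.integral_const, smul_eq_mul, sub_zero] at h16
    calc E Ts ≤ Ts * γbar := h16
      _ = γbar * Ts := mul_comm _ _
  have h17 : Real.cos (Δbar * Ts) ^ 2 ≤ Real.exp (E Ts) * ‖⟪φ Ts, ψ Ts⟫_ℂ‖ ^ 2 := by
    rw [← hgTsnorm]
    exact hlim
  have h18 : Real.exp (-(γbar * Ts)) ≤ Real.exp (-E Ts) := Real.exp_le_exp.mpr (by linarith)
  calc Real.cos (Δbar * Ts) ^ 2 * Real.exp (-(γbar * Ts))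
      ≤ Real.cos (Δbar * Ts) ^ 2 * Real.exp (-E Ts) :=
        mul_le_mul_of_nonneg_left h18 (sq_nonneg _)
    _ ≤ (Real.exp (E Ts) * ‖⟪φ Ts, ψ Ts⟫_ℂ‖ ^ 2) * Real.exp (-E Ts) :=
        mul_le_mul_of_nonneg_right h17 (Real.exp_pos _).le
    _ = ‖⟪φ Ts, ψ Ts⟫_ℂ‖ ^ 2 := by
        rw [mul_comm (Real.exp (E Ts)) _, mul_assoc, ← Real.exp_add]
        simp
end

section
/- Let ρ be a 2×2 positive semidefinite Hermitian complex matrix with trace 1, let a and b be unit vectors in ℂ², let g ∈ [0, 1] and let φ ∈ [0, π/4]. Suppose that Re⟨b, ρ b⟩ ≥ 1 - g and |⟨a, b⟩| ≥ cos(φ). Then Re⟨a, ρ a⟩ ≥ cos²(φ)·(1 - g) - (1/2)·sin(2φ). -/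
open scoped InnerProductSpace ComplexOrder

private lemma real_endgame (C S Y Z cφ sφ g r : ℝ)
    (hC0 : 0 ≤ C) (hS0 : 0 ≤ S) (hY0 : 0 ≤ Y) (hZ0 : 0 ≤ Z)
    (hcφ : 0 ≤ cφ) (hsφ : 0 ≤ sφ) (hpyth : sφ ^ 2 + cφ ^ 2 = 1) (hcos2 : 1 / 2 ≤ cφ ^ 2)
    (hcs : C ^ 2 + S ^ 2 = 1) (hYZ : Y ^ 2 + Z ^ 2 = 1) (hY2 : 1 - g ≤ Y ^ 2)
    (hg1 : g ≤ 1) (hC : cφ ≤ C) (hr : -(C * S * (Y * Z)) ≤ r) :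
    cφ ^ 2 * (1 - g) - 1 / 2 * (2 * sφ * cφ) ≤ (C * Y) ^ 2 + 2 * r + (S * Z) ^ 2 := by
  have hS2 : S ^ 2 = 1 - C ^ 2 := by linarith
  have hsφ2 : sφ ^ 2 = 1 - cφ ^ 2 := by linarith
  have hC2 : cφ ^ 2 ≤ C ^ 2 := by nlinarith
  have hCSle : C * S ≤ cφ * sφ := by
    have e1 : C ^ 2 * S ^ 2 = C ^ 2 * (1 - C ^ 2) := by rw [hS2]
    have e2 : cφ ^ 2 * sφ ^ 2 = cφ ^ 2 * (1 - cφ ^ 2) := by rw [hsφ2]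
    have e3 : (0:ℝ) ≤ (C ^ 2 - cφ ^ 2) * (C ^ 2 + cφ ^ 2 - 1) :=
      mul_nonneg (by linarith) (by linarith)
    have hsq : (C * S) ^ 2 ≤ (cφ * sφ) ^ 2 := by nlinarith [e1, e2, e3]
    nlinarith [mul_nonneg hC0 hS0, mul_nonneg hcφ hsφ]
  have hYZle : Y * Z ≤ 1 / 2 := by nlinarith [sq_nonneg (Y - Z)]
  have hterm1 : cφ ^ 2 * (1 - g) ≤ C ^ 2 * Y ^ 2 := by
    nlinarith
  have hterm2 : C * S * (Y * Z) ≤ cφ * sφ * (1 / 2) := by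
    have hYZ0 : (0:ℝ) ≤ Y * Z := mul_nonneg hY0 hZ0
    have hCS0 : (0:ℝ) ≤ C * S := mul_nonneg hC0 hS0
    calc C * S * (Y * Z) ≤ cφ * sφ * (Y * Z) :=
          mul_le_mul_of_nonneg_right hCSle hYZ0
      _ ≤ cφ * sφ * (1 / 2) :=
          mul_le_mul_of_nonneg_left hYZle (mul_nonneg hcφ hsφ)
  nlinarith [sq_nonneg (S * Z)]

theorem stmt9 (ρ : Matrix (Fin 2) (Fin 2) ℂ) (hρ : ρ.PosSemidef) (htr : ρ.trace = 1)
    (a b : EuclideanSpace ℂ (Fin 2)) (ha : ‖a‖ = 1) (hb : ‖b‖ = 1)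
    (g : ℝ) (hg : g ∈ Set.Icc (0 : ℝ) 1)
    (φ : ℝ) (hφ : φ ∈ Set.Icc (0 : ℝ) (Real.pi / 4))
    (h1 : 1 - g ≤ (⟪b, act ρ b⟫_ℂ).re)
    (h2 : Real.cos φ ≤ ‖⟪a, b⟫_ℂ‖) :
    Real.cos φ ^ 2 * (1 - g) - 1 / 2 * Real.sin (2 * φ) ≤ (⟪a, act ρ a⟫_ℂ).re := by
  obtain ⟨hg0, hg1⟩ := hg
  obtain ⟨hφ0, hφ1⟩ := hφ
  have act_apply : ∀ (M : Matrix (Fin 2) (Fin 2) ℂ) (v : EuclideanSpace ℂ (Fin 2)) (i : Fin 2),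
      act M v i = M i 0 * v 0 + M i 1 * v 1 := by
    intro M v i
    fin_cases i <;> simp [act, Matrix.toEuclideanLin_apply, Matrix.mulVec, dotProduct, Fin.sum_univ_two]
  have inner2 : ∀ x y : EuclideanSpace ℂ (Fin 2),
      ⟪x, y⟫_ℂ = (starRingEnd ℂ) (x 0) * y 0 + (starRingEnd ℂ) (x 1) * y 1 := by
    intro x y
    simp [PiLp.inner_apply, Fin.sum_univ_two, RCLike.inner_apply]; ring
  have hb' : (starRingEnd ℂ) (b 0) * b 0 + (starRingEnd ℂ) (b 1) * b 1 = 1 := by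
    rw [← inner2, inner_self_eq_norm_sq_to_K, hb]; norm_num
  have ha' : (starRingEnd ℂ) (a 0) * a 0 + (starRingEnd ℂ) (a 1) * a 1 = 1 := by
    rw [← inner2, inner_self_eq_norm_sq_to_K, ha]; norm_num
  set bp : EuclideanSpace ℂ (Fin 2) := WithLp.toLp 2 ![-(starRingEnd ℂ) (b 1), (starRingEnd ℂ) (b 0)] with hbp
  have hbp0 : bp 0 = -(starRingEnd ℂ) (b 1) := rfl
  have hbp1 : bp 1 = (starRingEnd ℂ) (b 0) := rfl
  open MatrixOrder Matrix.Norms.L2Operator in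
  set R := CFC.sqrt ρ with hRdef
  have hRR : R * R = ρ := by
    open MatrixOrder Matrix.Norms.L2Operator in
    exact CFC.sqrt_mul_sqrt_self ρ hρ.nonneg
  have key : ∀ v w : EuclideanSpace ℂ (Fin 2), ⟪v, act ρ w⟫_ℂ = ⟪act R v, act R w⟫_ℂ := by
    intro v w
    have hsq : act ρ w = act R (act R w) := by
      simp only [act]; rw [← hRR]
      simp [Matrix.toEuclideanLin_apply, Matrix.mulVec_mulVec]
    have herm : R.IsHermitian := by
      open MatrixOrder Matrix.Norms.L2Operator in
      exact (Matrix.nonneg_iff_posSemidef.mp (CFC.sqrt_nonneg ρ)).1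
    rw [hsq]
    conv_rhs => rw [show act R v = Matrix.toEuclideanLin R.conjTranspose v by rw [herm]; rfl]
    rw [Matrix.toEuclideanLin_conjTranspose_eq_adjoint, LinearMap.adjoint_inner_left]
    rfl
  set c : ℂ := ⟪b, a⟫_ℂ with hc
  set s : ℂ := ⟪bp, a⟫_ℂ with hs
  have hcval : c = (starRingEnd ℂ) (b 0) * a 0 + (starRingEnd ℂ) (b 1) * a 1 := inner2 b a
  have hsval : s = -(b 1) * a 0 + b 0 * a 1 := by
    rw [hs, inner2, hbp0, hbp1]; simp
  have hdecomp : a = c • b + s • bp := by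
    ext i
    fin_cases i
    · show a 0 = c * b 0 + s * bp 0
      rw [hcval, hsval, hbp0]
      linear_combination (-(a 0)) * hb'
    · show a 1 = c * b 1 + s * bp 1
      rw [hcval, hsval, hbp1]
      linear_combination (-(a 1)) * hb'
  have hcs : ‖c‖ ^ 2 + ‖s‖ ^ 2 = 1 := by
    have hC : (starRingEnd ℂ) c * c + (starRingEnd ℂ) s * s = 1 := by
      rw [hcval, hsval]
      simp only [map_add, map_mul, map_neg, Complex.conj_conj]
      linear_combination ((starRingEnd ℂ) (a 0) * a 0 + (starRingEnd ℂ) (a 1) * a 1) * hb' + ha'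
    have h2' : ((‖c‖ ^ 2 + ‖s‖ ^ 2 : ℝ) : ℂ) = 1 := by
      push_cast
      rw [← Complex.mul_conj', ← Complex.mul_conj'] at *
      linear_combination hC
    exact_mod_cast h2'
  have htr2 : ρ 0 0 + ρ 1 1 = 1 := by
    simpa [Matrix.trace, Fin.sum_univ_two] using htr
  have hsum : ⟪b, act ρ b⟫_ℂ + ⟪bp, act ρ bp⟫_ℂ = 1 := by
    rw [inner2, inner2, act_apply, act_apply, act_apply, act_apply, hbp0, hbp1]
    simp only [map_neg, Complex.conj_conj]
    linear_combination (ρ 0 0 + ρ 1 1) * hb' + htr2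
  set x := act R a with hx
  set y := act R b with hy
  set z := act R bp with hz
  have hxdecomp : x = c • y + s • z := by
    rw [hx, hdecomp]
    simp [act, map_add, map_smul, hy, hz]
  have hY2 : 1 - g ≤ ‖y‖ ^ 2 := by
    rw [← inner_self_eq_norm_sq (𝕜 := ℂ)]
    calc (1 : ℝ) - g ≤ (⟪b, act ρ b⟫_ℂ).re := h1
      _ = (⟪y, y⟫_ℂ).re := by rw [key]
  have hYZ : ‖y‖ ^ 2 + ‖z‖ ^ 2 = 1 := by
    have h := congrArg Complex.re hsum
    rw [key, key] at h
    simp only [Complex.add_re, Complex.one_re] at h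
    rw [← inner_self_eq_norm_sq (𝕜 := ℂ), ← inner_self_eq_norm_sq (𝕜 := ℂ)]
    exact h
  have hgoal : (⟪a, act ρ a⟫_ℂ).re = ‖x‖ ^ 2 := by
    rw [key]
    exact inner_self_eq_norm_sq (𝕜 := ℂ) x
  rw [hgoal, hxdecomp, norm_add_sq (𝕜 := ℂ), norm_smul, norm_smul]
  have hcross : -(‖c‖ * ‖s‖ * (‖y‖ * ‖z‖)) ≤ RCLike.re ⟪c • y, s • z⟫_ℂ := by
    have h1' : |RCLike.re ⟪c • y, s • z⟫_ℂ| ≤ ‖⟪c • y, s • z⟫_ℂ‖ := RCLike.abs_re_le_norm _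
    have h2' : ‖⟪c • y, s • z⟫_ℂ‖ ≤ ‖c • y‖ * ‖s • z‖ := norm_inner_le_norm _ _
    rw [norm_smul, norm_smul] at h2'
    have h3' := neg_abs_le (RCLike.re ⟪c • y, s • z⟫_ℂ)
    calc -(‖c‖ * ‖s‖ * (‖y‖ * ‖z‖)) = -(‖c‖ * ‖y‖ * (‖s‖ * ‖z‖)) := by ring
      _ ≤ -|RCLike.re ⟪c • y, s • z⟫_ℂ| := neg_le_neg (h1'.trans h2')
      _ ≤ _ := h3'
  have hC : Real.cos φ ≤ ‖c‖ := h2.trans (le_of_eq (norm_inner_symm a b))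
  have hcosφ : (0:ℝ) ≤ Real.cos φ := Real.cos_nonneg_of_mem_Icc
    ⟨by linarith [Real.pi_pos], by linarith [Real.pi_pos]⟩
  have hsinφ : (0:ℝ) ≤ Real.sin φ := Real.sin_nonneg_of_nonneg_of_le_pi hφ0
    (le_trans hφ1 (by linarith [Real.pi_pos]))
  have hcos2 : (1:ℝ)/2 ≤ Real.cos φ ^ 2 := by
    have h4 : Real.cos (Real.pi / 4) ≤ Real.cos φ :=
      Real.cos_le_cos_of_nonneg_of_le_pi hφ0 (by linarith [Real.pi_pos]) hφ1
    rw [Real.cos_pi_div_four] at h4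
    nlinarith [Real.sq_sqrt (by norm_num : (0:ℝ) ≤ 2), Real.sqrt_nonneg 2]
  rw [Real.sin_two_mul]
  exact real_endgame ‖c‖ ‖s‖ ‖y‖ ‖z‖ (Real.cos φ) (Real.sin φ) g _
    (norm_nonneg c) (norm_nonneg s) (norm_nonneg y) (norm_nonneg z)
    hcosφ hsinφ (Real.sin_sq_add_cos_sq φ) hcos2 hcs hYZ hY2 hg1 hC hcross
end
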